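/- arXiv:1808.00587 — 4 statements merged into one kernel-verified Lean document; each statement's English description precedes it below -/
import Mathlib

section
/- If ε', ε'' ∈ int(E) satisfy π(ε') = π(ε''), then v(ρ ε' + (1−ρ) ε'') = ρ v(ε') + (1−ρ) v(ε'') for every ρ ∈ [0,1]; that is, the optimal value function v is affine on each invariancy set {ε ∈ int(E) : π(ε) = π(ε̄)}. -/
open Matrix Set

noncomputable section

variable {n m : ℕ}

/-- Feasibility for the primal SDO problem `(P_ε)` (the feasible set does not depend on `ε`). -/
def PrimalFeasible (A : Fin m → Matrix (Fin n) (Fin n) ℝ) (b : Fin m → ℝ)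
    (X : Matrix (Fin n) (Fin n) ℝ) : Prop :=
  X.IsSymm ∧ (∀ i, ((A i) * X).trace = b i) ∧ X.PosSemidef

/-- Feasibility for the dual SDO problem `(D_ε)`. -/
def DualFeasible (C Cbar : Matrix (Fin n) (Fin n) ℝ)
    (A : Fin m → Matrix (Fin n) (Fin n) ℝ) (ε : ℝ)
    (y : Fin m → ℝ) (S : Matrix (Fin n) (Fin n) ℝ) : Prop :=
  S.IsSymm ∧ (∑ i, y i • A i) + S = C + ε • Cbar ∧ S.PosSemidef

/-- The optimal value function `v(ε)` of `(P_ε)`, with values in `EReal`. -/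
def vfun (C Cbar : Matrix (Fin n) (Fin n) ℝ) (A : Fin m → Matrix (Fin n) (Fin n) ℝ)
    (b : Fin m → ℝ) (ε : ℝ) : EReal :=
  sInf ((fun X => (((C + ε • Cbar) * X).trace : EReal)) '' {X | PrimalFeasible A b X})

/-- `E = {ε : v(ε) > -∞}`. -/
def Eset (C Cbar : Matrix (Fin n) (Fin n) ℝ) (A : Fin m → Matrix (Fin n) (Fin n) ℝ)
    (b : Fin m → ℝ) : Set ℝ :=
  {ε | ⊥ < vfun C Cbar A b ε}

/-- The primal optimal set `P*(ε)`. -/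
def PrimalOpt (C Cbar : Matrix (Fin n) (Fin n) ℝ) (A : Fin m → Matrix (Fin n) (Fin n) ℝ)
    (b : Fin m → ℝ) (ε : ℝ) : Set (Matrix (Fin n) (Fin n) ℝ) :=
  {X | PrimalFeasible A b X ∧ ∀ X', PrimalFeasible A b X' →
    ((C + ε • Cbar) * X).trace ≤ ((C + ε • Cbar) * X').trace}

/-- The dual optimal set `D*(ε)`. -/
def DualOpt (C Cbar : Matrix (Fin n) (Fin n) ℝ) (A : Fin m → Matrix (Fin n) (Fin n) ℝ)
    (b : Fin m → ℝ) (ε : ℝ) : Set ((Fin m → ℝ) × Matrix (Fin n) (Fin n) ℝ) :=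
  {p | DualFeasible C Cbar A ε p.1 p.2 ∧ ∀ y' S', DualFeasible C Cbar A ε y' S' →
    ∑ i, b i * y' i ≤ ∑ i, b i * p.1 i}

/-- A maximally complementary optimal solution: `X` lies in the relative interior of `P*(ε)`
and `(y, S)` in the relative interior of `D*(ε)`. -/
def MaxComp (C Cbar : Matrix (Fin n) (Fin n) ℝ) (A : Fin m → Matrix (Fin n) (Fin n) ℝ)
    (b : Fin m → ℝ) (ε : ℝ) (X : Matrix (Fin n) (Fin n) ℝ) (y : Fin m → ℝ)
    (S : Matrix (Fin n) (Fin n) ℝ) : Prop :=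
  X ∈ intrinsicInterior ℝ (PrimalOpt C Cbar A b ε) ∧
    (y, S) ∈ intrinsicInterior ℝ (DualOpt C Cbar A b ε)

/-- `π(ε) = π(ε')`: the optimal partitions at `ε` and `ε'` coincide, expressed through
maximally complementary solutions (`B = range X*`, `N = range S*`, `T` being determined
by `B` and `N`). -/
def SamePartition (C Cbar : Matrix (Fin n) (Fin n) ℝ) (A : Fin m → Matrix (Fin n) (Fin n) ℝ)
    (b : Fin m → ℝ) (ε ε' : ℝ) : Prop :=
  ∃ X y S X' y' S', MaxComp C Cbar A b ε X y S ∧ MaxComp C Cbar A b ε' X' y' S' ∧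
    LinearMap.range X.mulVecLin = LinearMap.range X'.mulVecLin ∧
    LinearMap.range S.mulVecLin = LinearMap.range S'.mulVecLin

/-- The standing assumptions: symmetric data, linearly independent constraint matrices and
the interior point condition at `ε = 0`. -/
def StandingAssumptions (C Cbar : Matrix (Fin n) (Fin n) ℝ)
    (A : Fin m → Matrix (Fin n) (Fin n) ℝ) (b : Fin m → ℝ) : Prop :=
  C.IsSymm ∧ Cbar.IsSymm ∧ (∀ i, (A i).IsSymm) ∧ LinearIndependent ℝ A ∧
    ∃ X y S, PrimalFeasible A b X ∧ X.PosDef ∧ DualFeasible C Cbar A 0 y S ∧ S.PosDef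

/-- The invariancy set of `ε̄`. -/
def InvSet (C Cbar : Matrix (Fin n) (Fin n) ℝ) (A : Fin m → Matrix (Fin n) (Fin n) ℝ)
    (b : Fin m → ℝ) (εbar : ℝ) : Set ℝ :=
  {ε | ε ∈ interior (Eset C Cbar A b) ∧ SamePartition C Cbar A b ε εbar}

/-- `dim B(ε) = dim B(ε')` and `dim N(ε) = dim N(ε')`, expressed through maximally
complementary solutions. -/
def DimsMatch (C Cbar : Matrix (Fin n) (Fin n) ℝ) (A : Fin m → Matrix (Fin n) (Fin n) ℝ)
    (b : Fin m → ℝ) (ε ε' : ℝ) : Prop :=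
  ∀ X y S X' y' S', MaxComp C Cbar A b ε X y S → MaxComp C Cbar A b ε' X' y' S' →
    Module.finrank ℝ (LinearMap.range X.mulVecLin) =
        Module.finrank ℝ (LinearMap.range X'.mulVecLin) ∧
      Module.finrank ℝ (LinearMap.range S.mulVecLin) =
        Module.finrank ℝ (LinearMap.range S'.mulVecLin)

/-- A transition point: a singleton invariancy set such that every neighborhood contains a
parameter at which `dim B` or `dim N` differs. -/
def IsTransitionPoint (C Cbar : Matrix (Fin n) (Fin n) ℝ) (A : Fin m → Matrix (Fin n) (Fin n) ℝ)
    (b : Fin m → ℝ) (εbar : ℝ) : Prop :=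
  εbar ∈ interior (Eset C Cbar A b) ∧
    (∀ ε ∈ interior (Eset C Cbar A b), ε ≠ εbar → ¬ SamePartition C Cbar A b ε εbar) ∧
    ∀ ξ : ℝ, 0 < ξ → ∃ ε ∈ Set.Ioo (εbar - ξ) (εbar + ξ) ∩ interior (Eset C Cbar A b),
      ¬ DimsMatch C Cbar A b ε εbar

/-- Existence of a strictly complementary optimal solution at `ε`. -/
def HasStrictComp (C Cbar : Matrix (Fin n) (Fin n) ℝ) (A : Fin m → Matrix (Fin n) (Fin n) ℝ)
    (b : Fin m → ℝ) (ε : ℝ) : Prop :=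
  ∃ X y S, X ∈ PrimalOpt C Cbar A b ε ∧ (y, S) ∈ DualOpt C Cbar A b ε ∧ (X + S).PosDef

/-- Nonsingularity of the Jacobian `J(X, y, S)` of the optimality system, as a linear map on
`S^n × ℝ^m × S^n`: only the trivial symmetric triple is mapped to zero. -/
def JNonsingular (A : Fin m → Matrix (Fin n) (Fin n) ℝ)
    (X S : Matrix (Fin n) (Fin n) ℝ) : Prop :=
  ∀ (DX DS : Matrix (Fin n) (Fin n) ℝ) (Dy : Fin m → ℝ), DX.IsSymm → DS.IsSymm →
    (∀ i, ((A i) * DX).trace = 0) → ((∑ i, Dy i • A i) + DS = 0) →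
    (DX * S + S * DX + X * DS + DS * X = 0) → DX = 0 ∧ Dy = 0 ∧ DS = 0

/-- Primal nondegeneracy of a primal feasible `X`. -/
def PrimalNondeg (A : Fin m → Matrix (Fin n) (Fin n) ℝ)
    (X : Matrix (Fin n) (Fin n) ℝ) : Prop :=
  ∃ (r : ℕ) (M₁ : Matrix (Fin n) (Fin r) ℝ) (M₂ : Matrix (Fin n) (Fin (n - r)) ℝ),
    M₁ᵀ * M₁ = 1 ∧ M₂ᵀ * M₂ = 1 ∧ M₁ᵀ * M₂ = 0 ∧
    LinearMap.range M₁.mulVecLin = LinearMap.range X.mulVecLin ∧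
    LinearIndependent ℝ (fun i =>
      Matrix.fromBlocks (M₁ᵀ * (A i) * M₁) (M₁ᵀ * (A i) * M₂) (M₂ᵀ * (A i) * M₁) 0)

/-- Dual nondegeneracy of a dual feasible `(y, S)` (the condition involves only `S`). -/
def DualNondeg (A : Fin m → Matrix (Fin n) (Fin n) ℝ)
    (S : Matrix (Fin n) (Fin n) ℝ) : Prop :=
  ∃ (k : ℕ) (N₁ : Matrix (Fin n) (Fin k) ℝ),
    N₁ᵀ * N₁ = 1 ∧ LinearMap.range N₁.mulVecLin = LinearMap.ker S.mulVecLin ∧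
    ∀ W : Matrix (Fin k) (Fin k) ℝ, W.IsSymm →
      W ∈ Submodule.span ℝ (Set.range fun i => N₁ᵀ * (A i) * N₁)

/-- A central solution with parameter `μ` for the problems `(P_ε)` and `(D_ε)`. -/
def CentralSol (C Cbar : Matrix (Fin n) (Fin n) ℝ) (A : Fin m → Matrix (Fin n) (Fin n) ℝ)
    (b : Fin m → ℝ) (ε μ : ℝ) (X : Matrix (Fin n) (Fin n) ℝ) (y : Fin m → ℝ)
    (S : Matrix (Fin n) (Fin n) ℝ) : Prop :=
  PrimalFeasible A b X ∧ DualFeasible C Cbar A ε y S ∧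
    X * S = μ • (1 : Matrix (Fin n) (Fin n) ℝ)

/-- The Frobenius norm of a matrix. -/
def frobNorm {α β : Type*} [Fintype α] [Fintype β] (M : Matrix α β ℝ) : ℝ :=
  Real.sqrt (∑ i, ∑ j, (M i j) ^ 2)

/-- The spectral norm (induced 2-norm) of a square matrix. -/
def specNorm {N : ℕ} (M : Matrix (Fin N) (Fin N) ℝ) : ℝ :=
  ‖LinearMap.toContinuousLinearMap (Matrix.toEuclideanLin M)‖

/-- The smallest eigenvalue of a symmetric matrix, via the Rayleigh quotient. -/
def lamMin {k : ℕ} (M : Matrix (Fin k) (Fin k) ℝ) : ℝ :=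
  sInf {r : ℝ | ∃ x : Fin k → ℝ, (∑ i, (x i) ^ 2) = 1 ∧ r = x ⬝ᵥ M.mulVec x}

/-- `θ^μ`: the operator norm of the inverse of the Jacobian `J(X, y, S)` on
`S^n × ℝ^m × S^n`, characterized as the least constant `t ≥ 0` with
`‖(ΔX, Δy, ΔS)‖ ≤ t * ‖J(X,y,S)(ΔX, Δy, ΔS)‖` for all symmetric `ΔX`, `ΔS`. -/
def thetaMu (A : Fin m → Matrix (Fin n) (Fin n) ℝ)
    (X S : Matrix (Fin n) (Fin n) ℝ) : ℝ :=
  sInf {t : ℝ | 0 ≤ t ∧ ∀ (DX DS : Matrix (Fin n) (Fin n) ℝ) (Dy : Fin m → ℝ),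
    DX.IsSymm → DS.IsSymm →
    Real.sqrt (frobNorm DX ^ 2 + (∑ i, (Dy i) ^ 2) + frobNorm DS ^ 2) ≤
      t * Real.sqrt ((∑ i, (((A i) * DX).trace) ^ 2) +
        frobNorm ((∑ i, Dy i • A i) + DS) ^ 2 +
        frobNorm ((1 / 2 : ℝ) • (DX * S + S * DX + X * DS + DS * X)) ^ 2)}

/-- A nonlinearity interval: a non-singleton open subinterval of `int(E)`, of maximal length,
on which `dim B(·)` and `dim N(·)` are constant while the optimal partition `π(·)` varies. -/
def IsNonlinearityInterval (C Cbar : Matrix (Fin n) (Fin n) ℝ)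
    (A : Fin m → Matrix (Fin n) (Fin n) ℝ) (b : Fin m → ℝ) (I : Set ℝ) : Prop :=
  I ⊆ interior (Eset C Cbar A b) ∧ IsOpen I ∧ I.OrdConnected ∧
    (∃ a ∈ I, ∃ c ∈ I, a ≠ c) ∧
    (∀ ε ∈ I, ∀ ε' ∈ I, DimsMatch C Cbar A b ε ε') ∧
    ¬ (∀ ε ∈ I, ∀ ε' ∈ I, SamePartition C Cbar A b ε ε') ∧
    ∀ I' : Set ℝ, I ⊆ I' → I' ⊆ interior (Eset C Cbar A b) → IsOpen I' → I'.OrdConnected →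
      (∀ ε ∈ I', ∀ ε' ∈ I', DimsMatch C Cbar A b ε ε') → I' = I

end


section AuxSDO

lemma helper_le {a b K : ℝ} (h : ∀ δ : ℝ, 0 < δ → a ≤ b + δ * K) : a ≤ b := by
  by_contra hc
  push_neg at hc
  have hab : 0 < a - b := by linarith
  have hδ : 0 < (a - b) / (2 * (|K| + 1)) := by positivity
  have := h _ hδ
  have hK : (a - b) / (2 * (|K| + 1)) * K ≤ (a - b) / 2 := by
    have h1 : (a - b) / (2 * (|K| + 1)) * K ≤ (a - b) / (2 * (|K| + 1)) * (|K| + 1) := by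
      apply mul_le_mul_of_nonneg_left _ hδ.le
      nlinarith [abs_nonneg K, le_abs_self K]
    calc (a - b) / (2 * (|K| + 1)) * K ≤ (a - b) / (2 * (|K| + 1)) * (|K| + 1) := h1
      _ = (a - b) / 2 := by
        rw [div_mul_eq_mul_div, mul_comm 2 (|K| + 1), ← div_div]
        congr 1
        rw [mul_div_assoc, div_self (by positivity), mul_one]
  linarith

lemma helper_scale {a q : ℝ} (h : ∀ s : ℝ, 0 < s → a ≤ s * q) : 0 ≤ q := by
  by_contra hc
  push_neg at hc
  have hq : 0 < -q := by linarith
  have hs : 0 < (|a| + 1) / (-q) := by positivity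
  have := h _ hs
  have h2 : (|a| + 1) / (-q) * q = -(|a| + 1) := by
    rw [div_mul_eq_mul_div, div_neg, mul_div_assoc, div_self hc.ne, mul_one]
  nlinarith [abs_nonneg a, neg_abs_le a]

open scoped MatrixOrder in
lemma psd_sqrt_aux {k : ℕ} {X : Matrix (Fin k) (Fin k) ℝ} (hX : X.PosSemidef) :
    ∃ R : Matrix (Fin k) (Fin k) ℝ, Rᴴ = R ∧ R * R = X :=
  ⟨CFC.sqrt X, (CFC.sqrt_nonneg X).posSemidef.isHermitian.eq, CFC.sqrt_mul_sqrt_self X hX.nonneg⟩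

lemma trace_psd_mul_nonneg {k : ℕ} {S X : Matrix (Fin k) (Fin k) ℝ}
    (hS : S.PosSemidef) (hX : X.PosSemidef) : 0 ≤ (S * X).trace := by
  obtain ⟨R, hRH, hRR⟩ := psd_sqrt_aux hX
  have h1 : (S * X).trace = (R * S * R).trace := by
    conv_lhs => rw [← hRR]
    rw [← Matrix.mul_assoc, Matrix.trace_mul_cycle]
  rw [h1]
  have hpsd : (R * S * Rᴴ).PosSemidef := hS.mul_mul_conjTranspose_same R
  rw [hRH] at hpsd
  exact hpsd.trace_nonneg

lemma trace_ctm_self_zero {k : ℕ} {N : Matrix (Fin k) (Fin k) ℝ}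
    (h : (Nᴴ * N).trace = 0) : N = 0 := by
  have hsum : ∑ j, ∑ i, (N i j)^2 = 0 := by
    simpa [Matrix.trace, Matrix.mul_apply, Matrix.conjTranspose_apply, Matrix.diag, sq] using h
  ext i j
  have h1 := (Finset.sum_eq_zero_iff_of_nonneg (fun j _ => Finset.sum_nonneg
    (fun i _ => sq_nonneg (N i j)))).mp hsum j (Finset.mem_univ j)
  have h2 := (Finset.sum_eq_zero_iff_of_nonneg (fun i _ => sq_nonneg (N i j))).mp h1 i
    (Finset.mem_univ i)
  simpa using pow_eq_zero_iff (n := 2) (by norm_num) |>.mp h2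

lemma psd_mul_eq_zero_of_trace_zero {k : ℕ} {S X : Matrix (Fin k) (Fin k) ℝ}
    (hS : S.PosSemidef) (hX : X.PosSemidef) (h : (S * X).trace = 0) : S * X = 0 := by
  obtain ⟨B, hBH, hB⟩ := psd_sqrt_aux hX
  obtain ⟨Cm, hCH, hC⟩ := psd_sqrt_aux hS
  have key : ((Cm * B)ᴴ * (Cm * B)).trace = 0 := by
    have : (Cm * B)ᴴ * (Cm * B) = B * S * B := by
      rw [Matrix.conjTranspose_mul, hBH, hCH, ← hC]
      noncomm_ring
    rw [this, Matrix.trace_mul_cycle, hB, Matrix.trace_mul_comm]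
    exact h
  have hCB : Cm * B = 0 := trace_ctm_self_zero key
  calc S * X = Cm * (Cm * B) * B := by rw [← hC, ← hB]; noncomm_ring
    _ = 0 := by rw [hCB]; simp

lemma mul_eq_zero_of_range_le {k : ℕ} {S X : Matrix (Fin k) (Fin k) ℝ}
    (h : LinearMap.range X.mulVecLin ≤ LinearMap.ker S.mulVecLin) : S * X = 0 := by
  have : ∀ v, (S * X) *ᵥ v = 0 := by
    intro v
    rw [← Matrix.mulVec_mulVec]
    exact h (LinearMap.mem_range.mpr ⟨v, rfl⟩)
  ext i j
  have := congr_fun (this (Pi.single j 1)) i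
  simpa [Matrix.mulVec_single] using this

lemma range_le_ker_of_mul_zero {k : ℕ} {S X : Matrix (Fin k) (Fin k) ℝ}
    (h : S * X = 0) : LinearMap.range X.mulVecLin ≤ LinearMap.ker S.mulVecLin := by
  rintro v ⟨w, rfl⟩
  simp only [LinearMap.mem_ker, Matrix.mulVecLin_apply, Matrix.mulVec_mulVec, h]
  simp

section scratch
variable {n m : ℕ}

lemma isSymm_hermitian {M : Matrix (Fin n) (Fin n) ℝ} (h : M.IsSymm) : M.IsHermitian := by
  rwa [Matrix.IsHermitian, Matrix.conjTranspose_eq_transpose_of_trivial]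

lemma psd_smul {M : Matrix (Fin n) (Fin n) ℝ} (h : M.PosSemidef) {a : ℝ} (ha : 0 ≤ a) :
    (a • M).PosSemidef := by
  refine Matrix.PosSemidef.of_dotProduct_mulVec_nonneg ?_ ?_
  · rw [Matrix.IsHermitian, Matrix.conjTranspose_smul]
    rw [h.1.eq]
    simp
  · intro x
    rw [Matrix.smul_mulVec, dotProduct_smul]
    exact mul_nonneg ha (h.dotProduct_mulVec_nonneg x)

lemma psd_vecMulVec (v : Fin n → ℝ) : (Matrix.vecMulVec v v).PosSemidef := by
  refine Matrix.PosSemidef.of_dotProduct_mulVec_nonneg ?_ ?_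
  · rw [Matrix.IsHermitian, Matrix.conjTranspose_eq_transpose_of_trivial]
    rw [Matrix.vecMulVec_eq (Fin 1)]
    simp [Matrix.transpose_mul]
  · intro x
    have : Matrix.vecMulVec v v *ᵥ x = (v ⬝ᵥ x) • v := by
      ext i
      simp only [Matrix.mulVec, Matrix.vecMulVec_apply, dotProduct, Pi.smul_apply,
        smul_eq_mul]
      rw [Finset.sum_mul]
      exact Finset.sum_congr rfl fun j _ => by ring
    have h2 : star x ⬝ᵥ Matrix.vecMulVec v v *ᵥ x = (v ⬝ᵥ x) * (v ⬝ᵥ x) := by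
      rw [this]
      simp only [dotProduct_smul, star_trivial, smul_eq_mul]
      first
      | (rw [show x ⬝ᵥ v = v ⬝ᵥ x from dotProduct_comm x v]; ring)
      | (rw [dotProduct_comm]; try ring)
      | rfl
    rw [h2]
    exact mul_self_nonneg _

lemma trace_vecMulVec (S : Matrix (Fin n) (Fin n) ℝ) (v : Fin n → ℝ) :
    (S * Matrix.vecMulVec v v).trace = v ⬝ᵥ S *ᵥ v := by
  simp [Matrix.trace, Matrix.mul_apply, Matrix.vecMulVec, Matrix.diag, Matrix.mulVec,
    dotProduct, Finset.mul_sum]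
  congr 1; ext i; congr 1; ext j; ring

end scratch

section scratch2
variable {n m : ℕ}

/-- The linear map `X ↦ (⟨A i, X⟩)_i`. -/
def PhiLin (A : Fin m → Matrix (Fin n) (Fin n) ℝ) :
    Matrix (Fin n) (Fin n) ℝ →ₗ[ℝ] (Fin m → ℝ) where
  toFun X := fun i => ((A i) * X).trace
  map_add' X Y := by ext i; simp [Matrix.mul_add]
  map_smul' r X := by ext i; simp [Matrix.mul_smul]

/-- The linear map `λ ↦ ∑ j, λ j • A j`. -/
def SumSmul (A : Fin m → Matrix (Fin n) (Fin n) ℝ) :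
    (Fin m → ℝ) →ₗ[ℝ] Matrix (Fin n) (Fin n) ℝ where
  toFun l := ∑ j, l j • A j
  map_add' x y := by simp [add_smul, Finset.sum_add_distrib]
  map_smul' r x := by simp [smul_smul, Finset.smul_sum]

lemma exists_rightinv (A : Fin m → Matrix (Fin n) (Fin n) ℝ)
    (hsymm : ∀ i, (A i).IsSymm) (hli : LinearIndependent ℝ A) :
    ∃ e : (Fin m → ℝ) →ₗ[ℝ] Matrix (Fin n) (Fin n) ℝ,
      (∀ u, (e u).IsSymm) ∧ (∀ u i, ((A i) * (e u)).trace = u i) := by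
  set T : (Fin m → ℝ) →ₗ[ℝ] (Fin m → ℝ) := (PhiLin A).comp (SumSmul A) with hT
  have hinj : Function.Injective T := by
    rw [← LinearMap.ker_eq_bot, LinearMap.ker_eq_bot']
    intro l hl
    set M := ∑ j, l j • A j with hM
    have hMsymm : M.IsSymm := by
      rw [Matrix.IsSymm, hM, Matrix.transpose_sum]
      exact Finset.sum_congr rfl fun j _ => by rw [Matrix.transpose_smul, (hsymm j).eq]
    have hTl : ∀ i, ((A i) * M).trace = 0 := by
      intro i
      have := congr_fun hl i
      simpa [hT, PhiLin, SumSmul, hM] using this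
    have hMM : (Mᴴ * M).trace = 0 := by
      rw [show Mᴴ = M by rw [Matrix.conjTranspose_eq_transpose_of_trivial]; exact hMsymm]
      have : (M * M).trace = ∑ i, l i * ((A i) * M).trace := by
        conv_lhs => rw [hM, Finset.sum_mul]
        rw [Matrix.trace_sum]
        exact Finset.sum_congr rfl fun i _ => by rw [Matrix.smul_mul, Matrix.trace_smul]; simp [hM]
      rw [this]
      simp [hTl]
    have hM0 : M = 0 := trace_ctm_self_zero hMM
    have := Fintype.linearIndependent_iff.mp hli l (by rw [← hM]; exact hM0)
    ext i; exact this i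
  have hsurj : Function.Surjective T := LinearMap.injective_iff_surjective.mp hinj
  let Teq := LinearEquiv.ofBijective T ⟨hinj, hsurj⟩
  refine ⟨(SumSmul A).comp (Teq.symm : (Fin m → ℝ) →ₗ[ℝ] (Fin m → ℝ)), ?_, ?_⟩
  · intro u
    rw [Matrix.IsSymm]
    simp only [LinearMap.comp_apply, SumSmul, LinearMap.coe_mk, AddHom.coe_mk]
    rw [Matrix.transpose_sum]
    exact Finset.sum_congr rfl fun j _ => by rw [Matrix.transpose_smul, (hsymm j).eq]
  · intro u i
    have : T (Teq.symm u) = u := Teq.apply_symm_apply u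
    have h2 := congr_fun this i
    simpa [hT, PhiLin, LinearMap.comp_apply] using h2

lemma trace_dual_split {A : Fin m → Matrix (Fin n) (Fin n) ℝ} {b : Fin m → ℝ}
    {X S c : Matrix (Fin n) (Fin n) ℝ} {y : Fin m → ℝ}
    (hfeas : ∀ i, ((A i) * X).trace = b i)
    (heq : (∑ i, y i • A i) + S = c) :
    (c * X).trace = (∑ i, b i * y i) + (S * X).trace := by
  have : c * X = (∑ i, y i • (A i * X)) + S * X := by
    rw [← heq, Matrix.add_mul, Finset.sum_mul]
    congr 1
    exact Finset.sum_congr rfl fun i _ => Matrix.smul_mul _ _ _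
  rw [this, Matrix.trace_add, Matrix.trace_sum]
  congr 1
  exact Finset.sum_congr rfl fun i _ => by rw [Matrix.trace_smul, hfeas i]; simp [mul_comm]

end scratch2

section scratch3
attribute [local instance] Matrix.normedAddCommGroup Matrix.normedSpace
variable {n m : ℕ}

lemma quad_bound {D : Matrix (Fin n) (Fin n) ℝ} {v : Fin n → ℝ} {δ : ℝ}
    (hv : (∑ i, v i ^ 2) = 1) (hD : ∀ i j, |D i j| ≤ δ) : |v ⬝ᵥ D *ᵥ v| ≤ δ * n := by
  have hne : Nonempty (Fin n) := by
    by_contra hc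
    rw [not_nonempty_iff] at hc
    rw [Finset.sum_of_isEmpty] at hv; norm_num at hv
  obtain ⟨i0⟩ := hne
  have hδ : 0 ≤ δ := le_trans (abs_nonneg (D i0 i0)) (hD i0 i0)
  have h1 : |v ⬝ᵥ D *ᵥ v| ≤ ∑ i, ∑ j, |v i| * |D i j| * |v j| := by
    rw [dotProduct, ]
    refine (Finset.abs_sum_le_sum_abs _ _).trans ?_
    apply Finset.sum_le_sum
    intro i _
    rw [Matrix.mulVec, dotProduct, Finset.mul_sum]
    refine (Finset.abs_sum_le_sum_abs _ _).trans ?_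
    apply Finset.sum_le_sum
    intro j _
    rw [abs_mul, abs_mul]
    exact le_of_eq (by ring)
  have h2 : ∑ i, ∑ j, |v i| * |D i j| * |v j| ≤ δ * ∑ i, ∑ j, |v i| * |v j| := by
    rw [Finset.mul_sum]
    apply Finset.sum_le_sum; intro i _
    rw [Finset.mul_sum]
    apply Finset.sum_le_sum; intro j _
    have := hD i j
    have h0 : 0 ≤ |v i| * |v j| := by positivity
    nlinarith [abs_nonneg (v i), abs_nonneg (v j), abs_nonneg (D i j)]
  have h3 : ∑ i, ∑ j, |v i| * |v j| = (∑ i, |v i|) ^ 2 := by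
    rw [sq, Finset.sum_mul_sum]
  have h4 : (∑ i, |v i|) ^ 2 ≤ (n : ℝ) := by
    have := sq_sum_le_card_mul_sum_sq (s := Finset.univ) (f := fun i => |v i|)
    simp only [Finset.card_univ, Fintype.card_fin, sq_abs] at this
    rw [hv] at this
    simpa using this
  calc |v ⬝ᵥ D *ᵥ v| ≤ δ * ((∑ i, |v i|) ^ 2) := by rw [← h3]; exact h1.trans h2
    _ ≤ δ * n := by nlinarith

lemma isOpen_O :
    IsOpen {Y : Matrix (Fin n) (Fin n) ℝ | ∀ v : Fin n → ℝ, (∑ i, v i ^ 2) = 1 →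
      0 < v ⬝ᵥ Y *ᵥ v} := by
  cases isEmpty_or_nonempty (Fin n) with
  | inl h =>
    convert isOpen_univ
    ext Y
    simp only [Set.mem_setOf_eq, Set.mem_univ, iff_true]
    intro v hv
    rw [Finset.sum_of_isEmpty] at hv; norm_num at hv
  | inr h =>
    refine Metric.isOpen_iff.mpr ?_
    intro Y hY
    -- the sphere K
    set K : Set (Fin n → ℝ) := {v | (∑ i, v i ^ 2) = 1} with hK
    have hKc : IsCompact K := by
      have hclosed : IsClosed K := by
        have : Continuous (fun v : Fin n → ℝ => ∑ i, v i ^ 2) :=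
          continuous_finset_sum _ fun i _ => (continuous_apply i).pow 2
        exact isClosed_singleton.preimage this
      have hsub : K ⊆ Metric.closedBall 0 1 := by
        intro v hv
        rw [Metric.mem_closedBall, dist_zero_right]
        rw [pi_norm_le_iff_of_nonneg (by norm_num)]
        intro i
        rw [Real.norm_eq_abs, abs_le_one_iff_mul_self_le_one, ← sq]
        have h5 : v i ^ 2 ≤ ∑ j, v j ^ 2 :=
          Finset.single_le_sum (fun j _ => sq_nonneg (v j)) (Finset.mem_univ i)
        rw [hv] at h5
        exact h5
      exact (isCompact_closedBall (0 : Fin n → ℝ) 1).of_isClosed_subset hclosed hsub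
    have hKne : K.Nonempty := by
      refine ⟨Pi.single (Classical.arbitrary (Fin n)) 1, ?_⟩
      simp [hK, Pi.single_apply]
    have hcont : Continuous (fun v : Fin n → ℝ => v ⬝ᵥ Y *ᵥ v) := by
      have heq : (fun v : Fin n → ℝ => v ⬝ᵥ Y *ᵥ v) =
          fun v => ∑ i, v i * ∑ j, Y i j * v j := rfl
      rw [heq]
      apply continuous_finset_sum
      intro i _
      exact (continuous_apply i).mul
        (continuous_finset_sum _ fun j _ => continuous_const.mul (continuous_apply j))
    obtain ⟨v0, hv0K, hv0min⟩ := hKc.exists_isMinOn hKne hcont.continuousOn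
    set α := v0 ⬝ᵥ Y *ᵥ v0 with hα
    have hαpos : 0 < α := hY v0 hv0K
    refine ⟨α / (n + 1), by positivity, ?_⟩
    intro Z hZ
    intro v hv
    have hvK : v ∈ K := hv
    have hmin : α ≤ v ⬝ᵥ Y *ᵥ v := hv0min hvK
    have hentry : ∀ i j, |(Z - Y) i j| ≤ α / (n + 1) := by
      intro i j
      have h1 : dist (Z i j) (Y i j) ≤ dist Z Y := by
        calc dist (Z i j) (Y i j) ≤ dist (Z i) (Y i) := dist_le_pi_dist _ _ j
          _ ≤ dist Z Y := dist_le_pi_dist _ _ i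
      rw [Real.dist_eq] at h1
      have := le_of_lt (lt_of_le_of_lt h1 hZ)
      simpa [Matrix.sub_apply] using this
    have hbound := quad_bound hv hentry
    have hlt : α / (n + 1) * n < α := by
      rw [div_mul_eq_mul_div, div_lt_iff₀ (by positivity)]
      nlinarith
    have hsplit : v ⬝ᵥ Z *ᵥ v = v ⬝ᵥ Y *ᵥ v + v ⬝ᵥ (Z - Y) *ᵥ v := by
      rw [Matrix.sub_mulVec, dotProduct_sub]
      ring
    rw [hsplit]
    have := abs_le.mp hbound
    linarith

end scratch3

section scratch4
attribute [local instance] Matrix.normedAddCommGroup Matrix.normedSpace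
variable {n m : ℕ}

lemma isSymm_of_hermitian {M : Matrix (Fin n) (Fin n) ℝ} (h : M.IsHermitian) : M.IsSymm := by
  rw [Matrix.IsSymm, ← Matrix.conjTranspose_eq_transpose_of_trivial, h.eq]

lemma posdef_of_unitquad {Y : Matrix (Fin n) (Fin n) ℝ} (hY : Y.IsSymm)
    (h : ∀ v : Fin n → ℝ, (∑ i, v i ^ 2) = 1 → 0 < v ⬝ᵥ Y *ᵥ v) : Y.PosDef := by
  refine Matrix.PosDef.of_dotProduct_mulVec_pos (isSymm_hermitian hY) ?_
  intro x hx
  have hsum : 0 < ∑ i, x i ^ 2 := by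
    obtain ⟨i, hi⟩ := Function.ne_iff.mp hx
    exact Finset.sum_pos' (fun j _ => sq_nonneg _)
      ⟨i, Finset.mem_univ i, lt_of_le_of_ne (sq_nonneg _) (Ne.symm (pow_ne_zero 2 hi))⟩
  set r := Real.sqrt (∑ i, x i ^ 2) with hr
  have hrpos : 0 < r := Real.sqrt_pos.mpr hsum
  have hr2 : r ^ 2 = ∑ i, x i ^ 2 := Real.sq_sqrt hsum.le
  set v := r⁻¹ • x with hv
  have hv1 : (∑ i, v i ^ 2) = 1 := by
    simp only [hv, Pi.smul_apply, smul_eq_mul, mul_pow, ← Finset.mul_sum]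
    rw [← hr2]
    field_simp
  have hq := h v hv1
  have hexp : v ⬝ᵥ Y *ᵥ v = r⁻¹ ^ 2 * (x ⬝ᵥ Y *ᵥ x) := by
    rw [hv, smul_dotProduct, Matrix.mulVec_smul, dotProduct_smul]
    simp [smul_eq_mul]; ring
  rw [hexp] at hq
  have : 0 < x ⬝ᵥ Y *ᵥ x := by
    by_contra hc
    push_neg at hc
    nlinarith [sq_nonneg r⁻¹, inv_pos.mpr hrpos]
  simpa using this

lemma posdef_mem_O {Y : Matrix (Fin n) (Fin n) ℝ} (h : Y.PosDef) :
    ∀ v : Fin n → ℝ, (∑ i, v i ^ 2) = 1 → 0 < v ⬝ᵥ Y *ᵥ v := by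
  intro v hv
  have hv0 : v ≠ 0 := by
    intro hc
    rw [hc] at hv
    simp at hv
  have := h.dotProduct_mulVec_pos hv0
  simpa using this

/-- The auxiliary convex set used in the separation argument. -/
def Aset (A : Fin m → Matrix (Fin n) (Fin n) ℝ) (b : Fin m → ℝ)
    (c : Matrix (Fin n) (Fin n) ℝ) : Set ((Fin m → ℝ) × ℝ) :=
  {p | ∃ X : Matrix (Fin n) (Fin n) ℝ, X.PosDef ∧
    (∀ i, p.1 i = ((A i) * X).trace - b i) ∧ (c * X).trace < p.2}

lemma Aset_open (A : Fin m → Matrix (Fin n) (Fin n) ℝ) (b : Fin m → ℝ)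
    (c : Matrix (Fin n) (Fin n) ℝ)
    (e : (Fin m → ℝ) →ₗ[ℝ] Matrix (Fin n) (Fin n) ℝ)
    (he_symm : ∀ u, (e u).IsSymm) (he : ∀ u i, ((A i) * (e u)).trace = u i) :
    IsOpen (Aset A b c) := by
  rw [isOpen_iff_mem_nhds]
  rintro p ⟨X, hXpd, hXfeas, hXc⟩
  set U : Set (Matrix (Fin n) (Fin n) ℝ × ℝ) :=
    {q | (∀ v : Fin n → ℝ, (∑ i, v i ^ 2) = 1 → 0 < v ⬝ᵥ q.1 *ᵥ v) ∧ (c * q.1).trace < q.2}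
    with hU
  have hUopen : IsOpen U := by
    have h1 : IsOpen {Y : Matrix (Fin n) (Fin n) ℝ | ∀ v : Fin n → ℝ,
        (∑ i, v i ^ 2) = 1 → 0 < v ⬝ᵥ Y *ᵥ v} := isOpen_O
    have h2 : IsOpen {q : Matrix (Fin n) (Fin n) ℝ × ℝ | (c * q.1).trace < q.2} := by
      apply isOpen_lt _ continuous_snd
      have heq : (fun q : Matrix (Fin n) (Fin n) ℝ × ℝ => (c * q.1).trace) =
          fun q => ∑ i, ∑ j, c i j * q.1 j i := by
        ext q
        simp [Matrix.trace, Matrix.mul_apply, Matrix.diag]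
      rw [heq]
      apply continuous_finset_sum; intro i _
      apply continuous_finset_sum; intro j _
      exact continuous_const.mul
        ((continuous_apply i).comp ((continuous_apply j).comp continuous_fst))
    have : U = ({Y : Matrix (Fin n) (Fin n) ℝ | ∀ v : Fin n → ℝ,
        (∑ i, v i ^ 2) = 1 → 0 < v ⬝ᵥ Y *ᵥ v} ×ˢ (Set.univ : Set ℝ)) ∩
        {q : Matrix (Fin n) (Fin n) ℝ × ℝ | (c * q.1).trace < q.2} := by
      ext q; simp only [hU, Set.mem_setOf_eq, Set.mem_inter_iff, Set.mem_prod, Set.mem_univ,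
        and_true]
    rw [this]
    exact (h1.prod isOpen_univ).inter h2
  set g : (Fin m → ℝ) × ℝ → Matrix (Fin n) (Fin n) ℝ × ℝ :=
    fun q => (X + e (q.1 - p.1), q.2) with hg
  have hgcont : Continuous g := by
    apply Continuous.prodMk _ continuous_snd
    have hecont : Continuous e := LinearMap.continuous_of_finiteDimensional e
    exact continuous_const.add (hecont.comp (continuous_fst.sub continuous_const))
  have hgp : g p ∈ U := by
    have : g p = (X, p.2) := by simp [hg]
    rw [this]
    exact ⟨posdef_mem_O hXpd, hXc⟩
  have hsub : g ⁻¹' U ⊆ Aset A b c := by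
    rintro q ⟨hq1, hq2⟩
    refine ⟨X + e (q.1 - p.1), ?_, ?_, ?_⟩
    · apply posdef_of_unitquad
      · exact Matrix.IsSymm.add (isSymm_of_hermitian hXpd.1) (he_symm _)
      · exact hq1
    · intro i
      rw [Matrix.mul_add, Matrix.trace_add, he]
      simp only [Pi.sub_apply]
      have := hXfeas i
      linarith
    · exact hq2
  exact Filter.mem_of_superset (hUopen.preimage hgcont |>.mem_nhds hgp) hsub

lemma Aset_convex (A : Fin m → Matrix (Fin n) (Fin n) ℝ) (b : Fin m → ℝ)
    (c : Matrix (Fin n) (Fin n) ℝ) : Convex ℝ (Aset A b c) := by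
  rintro p ⟨Xp, hXp, hfp, hcp⟩ q ⟨Xq, hXq, hfq, hcq⟩ a b' ha hb hab
  refine ⟨a • Xp + b' • Xq, ?_, ?_, ?_⟩
  · rcases eq_or_lt_of_le ha with ha0 | hapos
    · have hb1 : b' = 1 := by linarith
      have ha0' : a = 0 := ha0.symm
      simp [ha0', hb1, hXq]
    · exact Matrix.PosDef.add_posSemidef
        (by
          refine Matrix.PosDef.of_dotProduct_mulVec_pos ?_ ?_
          · rw [Matrix.IsHermitian, Matrix.conjTranspose_smul, hXp.1.eq]; simp
          · intro x hx
            rw [Matrix.smul_mulVec, dotProduct_smul]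
            exact mul_pos hapos (hXp.dotProduct_mulVec_pos hx))
        (psd_smul hXq.posSemidef hb)
  · intro i
    have h1 := hfp i
    have h2 := hfq i
    rw [Matrix.mul_add, Matrix.trace_add, Matrix.mul_smul, Matrix.mul_smul,
      Matrix.trace_smul, Matrix.trace_smul]
    simp only [Prod.fst_add, Prod.smul_fst, Pi.add_apply, Pi.smul_apply, smul_eq_mul]
    have hb'' : b' = 1 - a := by linarith
    rw [h1, h2, hb'']
    ring
  · have hsum : (c * (a • Xp + b' • Xq)).trace
        = a * (c * Xp).trace + b' * (c * Xq).trace := by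
      rw [Matrix.mul_add, Matrix.trace_add, Matrix.mul_smul, Matrix.mul_smul,
        Matrix.trace_smul, Matrix.trace_smul]
      simp [smul_eq_mul]
    rw [hsum]
    simp only [Prod.snd_add, Prod.smul_snd, smul_eq_mul]
    rcases eq_or_lt_of_le ha with ha0 | hapos
    · rcases eq_or_lt_of_le hb with hb0 | hbpos
      · exfalso; rw [← ha0, ← hb0] at hab; norm_num at hab
      · have := mul_lt_mul_of_pos_left hcq hbpos
        nlinarith [mul_le_mul_of_nonneg_left hcp.le ha]
    · rcases eq_or_lt_of_le hb with hb0 | hbpos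
      · have := mul_lt_mul_of_pos_left hcp hapos
        nlinarith [mul_le_mul_of_nonneg_left hcq.le hb]
      · have h1 := mul_lt_mul_of_pos_left hcp hapos
        have h2 := mul_lt_mul_of_pos_left hcq hbpos
        linarith

end scratch4

section scratch5
attribute [local instance] Matrix.normedAddCommGroup Matrix.normedSpace
variable {n m : ℕ}

lemma PrimalFeasible_def (A : Fin m → Matrix (Fin n) (Fin n) ℝ) (b : Fin m → ℝ)
    (X : Matrix (Fin n) (Fin n) ℝ) : True := trivial

lemma strong_duality_aux {C Cbar : Matrix (Fin n) (Fin n) ℝ}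
    {A : Fin m → Matrix (Fin n) (Fin n) ℝ} {b : Fin m → ℝ}
    (hC : C.IsSymm) (hCbar : Cbar.IsSymm) (hAsym : ∀ i, (A i).IsSymm)
    (hli : LinearIndependent ℝ A)
    {X0 : Matrix (Fin n) (Fin n) ℝ}
    (hX0symm : X0.IsSymm) (hX0feas : ∀ i, ((A i) * X0).trace = b i) (hX0pd : X0.PosDef)
    (ε V : ℝ)
    (hV : ∀ X : Matrix (Fin n) (Fin n) ℝ, X.IsSymm → (∀ i, ((A i) * X).trace = b i) →
      X.PosSemidef → V ≤ ((C + ε • Cbar) * X).trace) :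
    ∃ (y : Fin m → ℝ) (S : Matrix (Fin n) (Fin n) ℝ), S.IsSymm ∧
      ((∑ i, y i • A i) + S = C + ε • Cbar) ∧ S.PosSemidef ∧
      V ≤ ∑ i, b i * y i := by
  set c : Matrix (Fin n) (Fin n) ℝ := C + ε • Cbar with hc
  have hcsymm : c.IsSymm := by
    rw [hc, Matrix.IsSymm, Matrix.transpose_add, hC.eq, Matrix.transpose_smul, hCbar.eq]
  obtain ⟨e, he_symm, he⟩ := exists_rightinv A hAsym hli
  have hopen := Aset_open A b c e he_symm he
  have hconv := Aset_convex A b c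
  have hnotmem : ((0 : Fin m → ℝ), V) ∉ Aset A b c := by
    rintro ⟨X, hXpd, hfeas, hclt⟩
    have hfeas' : ∀ i, ((A i) * X).trace = b i := by
      intro i
      have := hfeas i
      simp only [Pi.zero_apply] at this
      linarith
    have := hV X (isSymm_of_hermitian hXpd.1) hfeas' hXpd.posSemidef
    simp only at hclt
    linarith
  obtain ⟨f, hf⟩ := geometric_hahn_banach_open_point hconv hopen hnotmem
  -- decomposition of f
  have hfdec : ∀ (u : Fin m → ℝ) (t : ℝ),
      f ((u, t)) = f ((u, 0)) + t * f (((0 : Fin m → ℝ), (1 : ℝ))) := by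
    intro u t
    have h1 : ((u, t) : (Fin m → ℝ) × ℝ) = (u, 0) + t • ((0 : Fin m → ℝ), (1 : ℝ)) := by
      ext <;> simp
    rw [h1, map_add, f.map_smul, smul_eq_mul]
  have hfzero : f (((0 : Fin m → ℝ), (0 : ℝ))) = 0 := by
    have : (((0 : Fin m → ℝ), (0 : ℝ)) : (Fin m → ℝ) × ℝ) = 0 := rfl
    rw [this, map_zero]
  set μ := f (((0 : Fin m → ℝ), (1 : ℝ))) with hμ
  -- the point from the Slater condition
  have hmem0 : ∀ t : ℝ, (c * X0).trace < t → (((0 : Fin m → ℝ), t)) ∈ Aset A b c := by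
    intro t ht
    exact ⟨X0, hX0pd, fun i => by simp [hX0feas i], ht⟩
  have hVμ : ∀ t : ℝ, (c * X0).trace < t → t * μ < V * μ := by
    intro t ht
    have := hf _ (hmem0 t ht)
    rw [hfdec 0 t, hfdec 0 V, hfzero] at this
    linarith
  have hμneg : μ < 0 := by
    rcases lt_trichotomy μ 0 with h | h | h
    · exact h
    · have := hVμ ((c * X0).trace + 1) (by linarith)
      rw [h] at this
      simp at this
    · -- μ > 0 : take t huge
      have h1 := hVμ (max ((c * X0).trace + 1) (V + 1)) (by
        have := le_max_left ((c * X0).trace + 1) (V + 1)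
        linarith)
      have h2 : V + 1 ≤ max ((c * X0).trace + 1) (V + 1) := le_max_right _ _
      nlinarith
  set μ' := -μ with hμ'
  have hμ'pos : 0 < μ' := by rw [hμ']; linarith
  -- the key inequality for symmetric psd matrices
  have hkey : ∀ X : Matrix (Fin n) (Fin n) ℝ, X.IsSymm → X.PosSemidef →
      V * μ' ≤ -(f ((fun i => ((A i) * X).trace - b i, 0))) + μ' * (c * X).trace := by
    have hkeypd : ∀ X : Matrix (Fin n) (Fin n) ℝ, X.IsSymm → X.PosDef →
        V * μ' ≤ -(f ((fun i => ((A i) * X).trace - b i, 0))) + μ' * (c * X).trace := by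
      intro X hXs hXpd
      apply helper_le (K := μ')
      intro s hs
      have hmem : ((fun i => ((A i) * X).trace - b i, (c * X).trace + s)) ∈ Aset A b c :=
        ⟨X, hXpd, fun i => rfl, lt_add_of_pos_right _ hs⟩
      have := hf _ (hmem)
      rw [hfdec _ ((c * X).trace + s), hfdec 0 V, hfzero] at this
      have hμμ' : μ = -μ' := by rw [hμ']; ring
      rw [hμμ'] at this
      nlinarith
    intro X hXs hXpsd
    apply helper_le
      (K := μ' * (c * (1 : Matrix (Fin n) (Fin n) ℝ)).trace
        - f ((fun i => ((A i) * (1 : Matrix (Fin n) (Fin n) ℝ)).trace, 0)))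
    intro δ hδ
    have hId : ((δ : ℝ) • (1 : Matrix (Fin n) (Fin n) ℝ)).PosDef := by
      refine Matrix.PosDef.of_dotProduct_mulVec_pos ?_ ?_
      · rw [Matrix.IsHermitian, Matrix.conjTranspose_smul, Matrix.conjTranspose_one]
        simp
      · intro x hx
        rw [Matrix.smul_mulVec, Matrix.one_mulVec, dotProduct_smul]
        have hpos : 0 < star x ⬝ᵥ x := by
          obtain ⟨i, hi⟩ := Function.ne_iff.mp hx
          apply Finset.sum_pos'
          · intro j _
            simpa using mul_self_nonneg (x j)
          · have hxi : 0 < x i * x i :=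
              lt_of_le_of_ne (mul_self_nonneg (x i)) (Ne.symm (mul_self_ne_zero.mpr hi))
            exact ⟨i, Finset.mem_univ i, by simpa using hxi⟩
        rw [smul_eq_mul]
        exact mul_pos hδ hpos
    have hXd_pd : (X + δ • (1 : Matrix (Fin n) (Fin n) ℝ)).PosDef :=
      Matrix.PosDef.posSemidef_add hXpsd hId
    have hXd_s : (X + δ • (1 : Matrix (Fin n) (Fin n) ℝ)).IsSymm :=
      isSymm_of_hermitian hXd_pd.1
    have h1 := hkeypd _ hXd_s hXd_pd
    -- rewrite the affine pieces
    have hu : (fun i => ((A i) * (X + δ • (1 : Matrix (Fin n) (Fin n) ℝ))).trace - b i)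
        = (fun i => ((A i) * X).trace - b i)
          + δ • (fun i => ((A i) * (1 : Matrix (Fin n) (Fin n) ℝ)).trace) := by
      ext i
      simp only [Pi.add_apply, Pi.smul_apply, smul_eq_mul]
      rw [Matrix.mul_add, Matrix.trace_add, Matrix.mul_smul, Matrix.trace_smul]
      simp only [smul_eq_mul]
      ring
    have hfu : f ((fun i => ((A i) * (X + δ • (1 : Matrix (Fin n) (Fin n) ℝ))).trace - b i, 0))
        = f ((fun i => ((A i) * X).trace - b i, 0))
          + δ * f ((fun i => ((A i) * (1 : Matrix (Fin n) (Fin n) ℝ)).trace, 0)) := by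
      have hsplit : ((fun i => ((A i) * (X + δ • (1 : Matrix (Fin n) (Fin n) ℝ))).trace - b i,
          (0:ℝ)) : (Fin m → ℝ) × ℝ)
          = ((fun i => ((A i) * X).trace - b i, 0) : (Fin m → ℝ) × ℝ)
            + δ • ((fun i => ((A i) * (1 : Matrix (Fin n) (Fin n) ℝ)).trace, 0) :
              (Fin m → ℝ) × ℝ) := by
        rw [Prod.ext_iff]
        constructor
        · rw [hu]; rfl
        · simp
      rw [hsplit, map_add, f.map_smul, smul_eq_mul]
    have htr : (c * (X + δ • (1 : Matrix (Fin n) (Fin n) ℝ))).trace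
        = (c * X).trace + δ * (c * (1 : Matrix (Fin n) (Fin n) ℝ)).trace := by
      rw [Matrix.mul_add, Matrix.trace_add, Matrix.mul_smul, Matrix.trace_smul]
      simp
    rw [hfu, htr] at h1
    calc V * μ' ≤ -(f ((fun i => ((A i) * X).trace - b i, 0))
          + δ * f ((fun i => ((A i) * (1 : Matrix (Fin n) (Fin n) ℝ)).trace, 0)))
          + μ' * ((c * X).trace + δ * (c * (1 : Matrix (Fin n) (Fin n) ℝ)).trace) := h1
      _ = -(f ((fun i => ((A i) * X).trace - b i, 0))) + μ' * (c * X).trace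
          + δ * (μ' * (c * (1 : Matrix (Fin n) (Fin n) ℝ)).trace
            - f ((fun i => ((A i) * (1 : Matrix (Fin n) (Fin n) ℝ)).trace, 0))) := by ring
  -- expansion of f on the first coordinate
  have hexp : ∀ u : Fin m → ℝ,
      f ((u, 0)) = ∑ i, u i * f ((Pi.single i 1, 0)) := by
    intro u
    have h1 : ((u, 0) : (Fin m → ℝ) × ℝ)
        = ∑ i, u i • (((Pi.single i (1:ℝ) : Fin m → ℝ), (0:ℝ)) : (Fin m → ℝ) × ℝ) := by
      rw [Prod.ext_iff]
      constructor
      · simp only [Prod.fst_sum]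
        ext j
        rw [pi_eq_sum_univ u]
        simp [Pi.single_apply]
      · rw [Prod.snd_sum]
        simp
    rw [h1, _root_.map_sum]
    exact Finset.sum_congr rfl fun i _ => by rw [f.map_smul, smul_eq_mul]
  -- define the dual solution
  set y : Fin m → ℝ := fun i => f ((Pi.single i 1, 0)) / μ' with hy
  set S : Matrix (Fin n) (Fin n) ℝ := c - ∑ i, y i • A i with hS
  have hStr : ∀ X : Matrix (Fin n) (Fin n) ℝ,
      (S * X).trace = (c * X).trace - ∑ i, y i * ((A i) * X).trace := by
    intro X
    rw [hS, Matrix.sub_mul, Matrix.trace_sub, Finset.sum_mul, Matrix.trace_sum]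
    congr 1
    exact Finset.sum_congr rfl fun i _ => by rw [Matrix.smul_mul, Matrix.trace_smul]; simp
  have hmain : ∀ X : Matrix (Fin n) (Fin n) ℝ, X.IsSymm → X.PosSemidef →
      V ≤ (∑ i, b i * y i) + (S * X).trace := by
    intro X hXs hXpsd
    have h1 := hkey X hXs hXpsd
    rw [hexp] at h1
    have hfy : ∀ i, f ((Pi.single i 1, 0)) = μ' * y i := by
      intro i
      rw [hy]
      field_simp
    have h2 : ∑ i, (((A i) * X).trace - b i) * f ((Pi.single i 1, 0))
        = μ' * ((∑ i, y i * ((A i) * X).trace) - ∑ i, b i * y i) := by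
      have hterm : ∀ i, (((A i) * X).trace - b i) * f ((Pi.single i 1, 0))
          = μ' * (y i * ((A i) * X).trace) - μ' * (b i * y i) := by
        intro i
        rw [hfy i]
        ring
      rw [Finset.sum_congr rfl (fun i _ => hterm i), Finset.sum_sub_distrib,
        ← Finset.mul_sum, ← Finset.mul_sum]
      ring
    rw [h2] at h1
    rw [hStr X]
    nlinarith [h1, hμ'pos]
  have hSsymm : S.IsSymm := by
    rw [hS, Matrix.IsSymm, Matrix.transpose_sub, hcsymm.eq, Matrix.transpose_sum]
    congr 1
    exact Finset.sum_congr rfl fun i _ => by rw [Matrix.transpose_smul, (hAsym i).eq]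
  have hSpsd : S.PosSemidef := by
    refine Matrix.PosSemidef.of_dotProduct_mulVec_nonneg (isSymm_hermitian hSsymm) ?_
    intro x
    have hq : 0 ≤ x ⬝ᵥ S *ᵥ x := by
      apply helper_scale (a := V - ∑ i, b i * y i)
      intro s hs
      have hpsd : ((s : ℝ) • Matrix.vecMulVec x x).PosSemidef :=
        psd_smul (psd_vecMulVec x) hs.le
      have h := hmain _ (isSymm_of_hermitian hpsd.1) hpsd
      rw [Matrix.mul_smul, Matrix.trace_smul, _root_.trace_vecMulVec, smul_eq_mul] at h
      linarith
    simpa using hq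
  refine ⟨y, S, hSsymm, ?_, hSpsd, ?_⟩
  · rw [hS]
    abel
  · have h0 := hmain 0 (by rw [Matrix.IsSymm, Matrix.transpose_zero]) Matrix.PosSemidef.zero
    rw [Matrix.mul_zero, Matrix.trace_zero] at h0
    linarith

end scratch5

end AuxSDO


section AuxFinal
variable {n m : ℕ}

lemma vfun_eq_of_opt {C Cbar : Matrix (Fin n) (Fin n) ℝ} {A : Fin m → Matrix (Fin n) (Fin n) ℝ}
    {b : Fin m → ℝ} {ε : ℝ} {Xs : Matrix (Fin n) (Fin n) ℝ}
    (h : Xs ∈ PrimalOpt C Cbar A b ε) :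
    vfun C Cbar A b ε = (((C + ε • Cbar) * Xs).trace : EReal) := by
  apply IsLeast.csInf_eq
  constructor
  · exact ⟨Xs, h.1, rfl⟩
  · rintro z ⟨X, hX, rfl⟩
    exact EReal.coe_le_coe_iff.mpr (h.2 X hX)

end AuxFinal

/-- the optimal value function is affine on each invariancy set. -/
theorem stmt2 {n m : ℕ} (C Cbar : Matrix (Fin n) (Fin n) ℝ)
    (A : Fin m → Matrix (Fin n) (Fin n) ℝ) (b : Fin m → ℝ)
    (hSA : StandingAssumptions C Cbar A b)
    (ε' ε'' : ℝ) (hε' : ε' ∈ interior (Eset C Cbar A b))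
    (hε'' : ε'' ∈ interior (Eset C Cbar A b))
    (hsp : SamePartition C Cbar A b ε' ε'')
    (ρ : ℝ) (hρ : ρ ∈ Set.Icc (0 : ℝ) 1) :
    vfun C Cbar A b (ρ * ε' + (1 - ρ) * ε'') =
      (ρ : EReal) * vfun C Cbar A b ε' + ((1 - ρ : ℝ) : EReal) * vfun C Cbar A b ε'' := by
  
  classical
  obtain ⟨hC, hCbar, hAsym, hli, X0, y0, S0, hX0feas, hX0pd, hdual0, hS0pd⟩ := hSA
  obtain ⟨X', y', S', X'', y'', S'', hmc', hmc'', hrX, hrS⟩ := hsp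
  have hX'opt : X' ∈ PrimalOpt C Cbar A b ε' := intrinsicInterior_subset hmc'.1
  have hD'opt : (y', S') ∈ DualOpt C Cbar A b ε' := intrinsicInterior_subset hmc'.2
  have hX''opt : X'' ∈ PrimalOpt C Cbar A b ε'' := intrinsicInterior_subset hmc''.1
  have hD''opt : (y'', S'') ∈ DualOpt C Cbar A b ε'' := intrinsicInterior_subset hmc''.2
  set V' : ℝ := ((C + ε' • Cbar) * X').trace with hV'
  set V'' : ℝ := ((C + ε'' • Cbar) * X'').trace with hV''
  -- strong duality at ε' and ε''
  obtain ⟨ysd', Ssd', hs1', hs2', hs3', hs4'⟩ :=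
    strong_duality_aux hC hCbar hAsym hli hX0feas.1 hX0feas.2.1 hX0pd ε' V'
      (fun X h1 h2 h3 => hX'opt.2 X ⟨h1, h2, h3⟩)
  obtain ⟨ysd'', Ssd'', hs1'', hs2'', hs3'', hs4''⟩ :=
    strong_duality_aux hC hCbar hAsym hli hX0feas.1 hX0feas.2.1 hX0pd ε'' V''
      (fun X h1 h2 h3 => hX''opt.2 X ⟨h1, h2, h3⟩)
  have hby' : V' ≤ ∑ i, b i * y' i :=
    le_trans hs4' (hD'opt.2 ysd' Ssd' ⟨hs1', hs2', hs3'⟩)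
  have hby'' : V'' ≤ ∑ i, b i * y'' i :=
    le_trans hs4'' (hD''opt.2 ysd'' Ssd'' ⟨hs1'', hs2'', hs3''⟩)
  have hsplit' : ((C + ε' • Cbar) * X').trace = (∑ i, b i * y' i) + (S' * X').trace :=
    trace_dual_split hX'opt.1.2.1 hD'opt.1.2.1
  have hsplit'' : ((C + ε'' • Cbar) * X'').trace = (∑ i, b i * y'' i) + (S'' * X'').trace :=
    trace_dual_split hX''opt.1.2.1 hD''opt.1.2.1
  have htr' : 0 ≤ (S' * X').trace := trace_psd_mul_nonneg hD'opt.1.2.2 hX'opt.1.2.2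
  have htr'' : 0 ≤ (S'' * X'').trace := trace_psd_mul_nonneg hD''opt.1.2.2 hX''opt.1.2.2
  have hbyV' : ∑ i, b i * y' i = V' := by rw [hV', hsplit']; linarith
  have hbyV'' : ∑ i, b i * y'' i = V'' := by rw [hV'', hsplit'']; linarith
  have htrS'' : (S'' * X'').trace = 0 := by
    rw [hV'', hsplit''] at hby''
    linarith
  have hS''X'' : S'' * X'' = 0 :=
    psd_mul_eq_zero_of_trace_zero hD''opt.1.2.2 hX''opt.1.2.2 htrS''
  have hS''X' : S'' * X' = 0 := by
    apply mul_eq_zero_of_range_le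
    rw [hrX]
    exact range_le_ker_of_mul_zero hS''X''
  have hcross : ((C + ε'' • Cbar) * X').trace = V'' := by
    have h := trace_dual_split hX'opt.1.2.1 hD''opt.1.2.1
    rw [hS''X', Matrix.trace_zero] at h
    rw [h, hbyV'']
    ring
  -- the convex combination of the dual solutions
  set yh : Fin m → ℝ := fun i => ρ * y' i + (1 - ρ) * y'' i with hyh
  set Sh : Matrix (Fin n) (Fin n) ℝ := ρ • S' + (1 - ρ) • S'' with hSh
  have hcomb : C + (ρ * ε' + (1 - ρ) * ε'') • Cbar
      = ρ • (C + ε' • Cbar) + (1 - ρ) • (C + ε'' • Cbar) := by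
    module
  have hdualh : DualFeasible C Cbar A (ρ * ε' + (1 - ρ) * ε'') yh Sh := by
    refine ⟨?_, ?_, ?_⟩
    · rw [hSh, Matrix.IsSymm, Matrix.transpose_add, Matrix.transpose_smul,
        Matrix.transpose_smul, hD'opt.1.1.eq, hD''opt.1.1.eq]
    · have hsum : ∑ i, yh i • A i
          = ρ • (∑ i, y' i • A i) + (1 - ρ) • (∑ i, y'' i • A i) := by
        rw [Finset.smul_sum, Finset.smul_sum, ← Finset.sum_add_distrib]
        refine Finset.sum_congr rfl fun i _ => ?_
        rw [hyh]
        module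
      rw [hsum, hcomb, ← hD'opt.1.2.1, ← hD''opt.1.2.1, hSh]
      module
    · exact Matrix.PosSemidef.add (psd_smul hD'opt.1.2.2 hρ.1)
        (psd_smul hD''opt.1.2.2 (by linarith [hρ.2]))
  have hbyh : ∑ i, b i * yh i = ρ * V' + (1 - ρ) * V'' := by
    have h1 : ∑ i, b i * yh i
        = ρ * (∑ i, b i * y' i) + (1 - ρ) * (∑ i, b i * y'' i) := by
      rw [Finset.mul_sum, Finset.mul_sum, ← Finset.sum_add_distrib]
      exact Finset.sum_congr rfl fun i _ => by rw [hyh]; ring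
    rw [h1, hbyV', hbyV'']
  have hval : ((C + (ρ * ε' + (1 - ρ) * ε'') • Cbar) * X').trace = ρ * V' + (1 - ρ) * V'' := by
    rw [hcomb, Matrix.add_mul, Matrix.smul_mul, Matrix.smul_mul, Matrix.trace_add,
      Matrix.trace_smul, Matrix.trace_smul, smul_eq_mul, smul_eq_mul, hcross, ← hV']
  have hXρopt : X' ∈ PrimalOpt C Cbar A b (ρ * ε' + (1 - ρ) * ε'') := by
    refine ⟨hX'opt.1, ?_⟩
    intro X hX
    have h1 : ((C + (ρ * ε' + (1 - ρ) * ε'') • Cbar) * X).trace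
        = (∑ i, b i * yh i) + (Sh * X).trace :=
      trace_dual_split hX.2.1 hdualh.2.1
    have h2 : 0 ≤ (Sh * X).trace := trace_psd_mul_nonneg hdualh.2.2 hX.2.2
    rw [hval, h1, hbyh]
    linarith
  rw [vfun_eq_of_opt hXρopt, vfun_eq_of_opt hX'opt, vfun_eq_of_opt hX''opt, hval, ← hV', ← hV'',
    ← EReal.coe_mul, ← EReal.coe_mul, ← EReal.coe_add]
end

section
/- Let ε ∈ int(E) with optimal partition (B, T, N), and let Q_B and Q_N be matrices whose columns form orthonormal bases of B and N respectively. Then every optimal solution (X̌, y̌, Š) ∈ P*(ε) × D*(ε) can be represented as X̌ = Q_B U_X̌ Q_B^T and Š = Q_N U_Š Q_N^T with uniquely determined positive semidefinite symmetric matrices U_X̌ (of size dim B) and U_Š (of size dim N). Moreover, if dim B > 0 and X̌ belongs to the relative interior of P*(ε), then U_X̌ is positive definite; and if dim N > 0 and (y̌, Š) belongs to the relative interior of D*(ε), then U_Š is positive definite. -/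
open Matrix Set

section Helpers

lemma matEq {n k : ℕ} {M N : Matrix (Fin n) (Fin k) ℝ}
    (h : ∀ v, M *ᵥ v = N *ᵥ v) : M = N := by
  ext i j
  simpa [Matrix.mulVec_single] using congrFun (h (Pi.single j 1)) i

lemma relint_combo {V : Type*} [AddCommGroup V] [Module ℝ V] [TopologicalSpace V]
    [IsTopologicalAddGroup V] [ContinuousSMul ℝ V] {s : Set V} {x y : V}
    (hx : x ∈ intrinsicInterior ℝ s) (hy : y ∈ s) :
    ∃ z ∈ s, ∃ t : ℝ, 0 < t ∧ t < 1 ∧ x = t • y + (1 - t) • z := by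
  obtain ⟨x', hx', hx'x⟩ := hx
  have hxspan : x ∈ affineSpan ℝ s := hx'x ▸ x'.2
  have hyspan : y ∈ affineSpan ℝ s := subset_affineSpan ℝ s hy
  have hmem : ∀ t : ℝ, t • (x - y) + y ∈ affineSpan ℝ s := by
    intro t
    have := AffineSubspace.smul_vsub_vadd_mem (affineSpan ℝ s) t hxspan hyspan hyspan
    simpa [vsub_eq_sub, vadd_eq_add] using this
  set f : ℝ → affineSpan ℝ s := fun t => ⟨t • (x - y) + y, hmem t⟩ with hf
  have hfc : Continuous f := by
    apply Continuous.subtype_mk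
    fun_prop
  have hf1 : f 1 = x' := by
    apply Subtype.ext
    simp [hf, ← hx'x]
  have hopen : IsOpen (f ⁻¹' interior (((↑) : affineSpan ℝ s → V) ⁻¹' s)) :=
    isOpen_interior.preimage hfc
  have h1 : (1 : ℝ) ∈ f ⁻¹' interior (((↑) : affineSpan ℝ s → V) ⁻¹' s) := by
    simp [hf1, hx']
  obtain ⟨ε, hε, hball⟩ := Metric.isOpen_iff.1 hopen 1 h1
  set δ : ℝ := ε / 2 with hδ
  have hδ0 : 0 < δ := by positivity
  have hmemball : (1 + δ) ∈ Metric.ball (1 : ℝ) ε := by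
    have hd : dist (1 + δ) (1 : ℝ) = δ := by
      rw [Real.dist_eq]
      simp [abs_of_nonneg hδ0.le]
    rw [Metric.mem_ball, hd, hδ]
    linarith
  have hz : (f (1 + δ) : V) ∈ s :=
    Set.mem_preimage.1 (interior_subset (Set.mem_preimage.1 (hball hmemball)))
  refine ⟨(f (1 + δ) : V), hz, δ / (1 + δ), by positivity, ?_, ?_⟩
  · rw [div_lt_one (by linarith)]; linarith
  · show x = (δ / (1 + δ)) • y + (1 - δ / (1 + δ)) • ((1 + δ) • (x - y) + y)
    have h1δ : (1 : ℝ) + δ ≠ 0 := by linarith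
    match_scalars <;> field_simp <;> ring



lemma psd_vanish {n : ℕ} {X : Matrix (Fin n) (Fin n) ℝ} (hX : X.PosSemidef)
    {v : Fin n → ℝ} (h : v ⬝ᵥ X *ᵥ v = 0) : X *ᵥ v = 0 := by
  have := (hX.dotProduct_mulVec_zero_iff v).1
  simpa [h] using this (by simpa using h)

lemma ker_mono {n : ℕ} {Xs Xc Z : Matrix (Fin n) (Fin n) ℝ}
    (hXc : Xc.PosSemidef) (hZ : Z.PosSemidef) {t : ℝ} (ht : 0 < t) (ht1 : t < 1)
    (hcomb : Xs = t • Xc + (1 - t) • Z) :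
    ∀ v, Xs *ᵥ v = 0 → Xc *ᵥ v = 0 := by
  intro v hv
  have h0 : v ⬝ᵥ Xs *ᵥ v = 0 := by rw [hv, dotProduct_zero]
  have hXcv : (0:ℝ) ≤ v ⬝ᵥ Xc *ᵥ v := by simpa using hXc.dotProduct_mulVec_nonneg v
  have hZv : (0:ℝ) ≤ v ⬝ᵥ Z *ᵥ v := by simpa using hZ.dotProduct_mulVec_nonneg v
  have hsum : t * (v ⬝ᵥ Xc *ᵥ v) + (1 - t) * (v ⬝ᵥ Z *ᵥ v) = 0 := by
    rw [← h0, hcomb]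
    simp [add_mulVec, smul_mulVec, dotProduct_add, dotProduct_smul, smul_eq_mul]
  have hXc0 : v ⬝ᵥ Xc *ᵥ v = 0 := by nlinarith
  exact psd_vanish hXc hXc0

lemma proj_fix {n k : ℕ} {Xs Xc : Matrix (Fin n) (Fin n) ℝ} {Q : Matrix (Fin n) (Fin k) ℝ}
    (hQ : Qᵀ * Q = 1)
    (hrange : LinearMap.range Q.mulVecLin = LinearMap.range Xs.mulVecLin)
    (hXs : Xs.IsSymm) (hXc : Xc.IsSymm)
    (hker : ∀ v, Xs *ᵥ v = 0 → Xc *ᵥ v = 0) :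
    Q * Qᵀ * Xc = Xc := by
  have hPXs : Q * Qᵀ * Xs = Xs := by
    apply matEq
    intro v
    have hv : Xs *ᵥ v ∈ LinearMap.range Q.mulVecLin := by
      rw [hrange]
      exact ⟨v, by simp [Matrix.mulVecLin_apply]⟩
    obtain ⟨u, hu⟩ := hv
    rw [Matrix.mulVecLin_apply] at hu
    calc (Q * Qᵀ * Xs) *ᵥ v = (Q * Qᵀ) *ᵥ (Xs *ᵥ v) := by
          rw [mulVec_mulVec]
      _ = (Q * Qᵀ) *ᵥ (Q *ᵥ u) := by rw [hu]
      _ = (Q * Qᵀ * Q) *ᵥ u := by rw [mulVec_mulVec]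
      _ = Q *ᵥ u := by rw [Matrix.mul_assoc, hQ, Matrix.mul_one]
      _ = Xs *ᵥ v := hu
  have hXsP : Xs * Q * Qᵀ = Xs := by
    have := congrArg Matrix.transpose hPXs
    rwa [Matrix.transpose_mul, Matrix.transpose_mul, Matrix.transpose_transpose,
      hXs.eq, ← Matrix.mul_assoc] at this
  have hXcP : Xc * Q * Qᵀ = Xc := by
    apply matEq
    intro v
    have h1 : Xs *ᵥ (v - (Q * Qᵀ) *ᵥ v) = 0 := by
      rw [mulVec_sub, mulVec_mulVec, ← Matrix.mul_assoc, hXsP, sub_self]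
    have h2 := hker _ h1
    rw [mulVec_sub, sub_eq_zero] at h2
    rw [Matrix.mul_assoc, ← mulVec_mulVec, ← h2]
  have := congrArg Matrix.transpose hXcP
  rwa [Matrix.transpose_mul, Matrix.transpose_mul, Matrix.transpose_transpose,
    hXc.eq, ← Matrix.mul_assoc] at this

lemma side_exists_unique {n k : ℕ} {Xs Xc : Matrix (Fin n) (Fin n) ℝ}
    {Q : Matrix (Fin n) (Fin k) ℝ}
    (hQ : Qᵀ * Q = 1)
    (hrange : LinearMap.range Q.mulVecLin = LinearMap.range Xs.mulVecLin)
    (hXs : Xs.IsSymm) (hXc : Xc.IsSymm) (hXcpsd : Xc.PosSemidef)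
    (hker : ∀ v, Xs *ᵥ v = 0 → Xc *ᵥ v = 0) :
    ∃! U : Matrix (Fin k) (Fin k) ℝ, U.PosSemidef ∧ Xc = Q * U * Qᵀ := by
  have hproj : Q * Qᵀ * Xc = Xc := proj_fix hQ hrange hXs hXc hker
  have hprojR : Xc * Q * Qᵀ = Xc := by
    have := congrArg Matrix.transpose hproj
    rwa [Matrix.transpose_mul, Matrix.transpose_mul, Matrix.transpose_transpose,
      hXc.eq, ← Matrix.mul_assoc] at this
  have hQH : Qᴴ = Qᵀ := Matrix.conjTranspose_eq_transpose_of_trivial Q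
  refine ⟨Qᵀ * Xc * Q, ⟨?_, ?_⟩, ?_⟩
  · have := hXcpsd.conjTranspose_mul_mul_same Q
    rwa [hQH] at this
  · calc Xc = Q * Qᵀ * Xc := hproj.symm
      _ = Q * Qᵀ * (Xc * Q * Qᵀ) := by rw [hprojR]
      _ = Q * (Qᵀ * Xc * Q) * Qᵀ := by simp only [Matrix.mul_assoc]
  · rintro U ⟨-, hU⟩
    rw [hU, ← Matrix.mul_assoc, ← Matrix.mul_assoc, hQ, Matrix.one_mul,
      Matrix.mul_assoc, hQ, Matrix.mul_one]

lemma side_posdef {n k : ℕ} {Xs Xc : Matrix (Fin n) (Fin n) ℝ}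
    {Q : Matrix (Fin n) (Fin k) ℝ}
    (hQ : Qᵀ * Q = 1)
    (hrange : LinearMap.range Q.mulVecLin = LinearMap.range Xs.mulVecLin)
    (hXs : Xs.IsSymm) (hXcpsd : Xc.PosSemidef)
    (hker : ∀ v, Xc *ᵥ v = 0 → Xs *ᵥ v = 0)
    (U : Matrix (Fin k) (Fin k) ℝ) (hUpsd : U.PosSemidef) (hU : Xc = Q * U * Qᵀ) :
    U.PosDef := by
  have hUeq : U = Qᵀ * Xc * Q := by
    rw [hU, ← Matrix.mul_assoc, ← Matrix.mul_assoc, hQ, Matrix.one_mul,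
      Matrix.mul_assoc, hQ, Matrix.mul_one]
  refine .of_dotProduct_mulVec_pos hUpsd.1 fun u hu => ?_
  set v : Fin n → ℝ := Q *ᵥ u with hv
  have hvne : v ≠ 0 := by
    intro h0
    apply hu
    have : Qᵀ *ᵥ v = u := by
      rw [hv, mulVec_mulVec, hQ, one_mulVec]
    rw [h0, mulVec_zero] at this
    exact this.symm
  have hkey : star u ⬝ᵥ U *ᵥ u = v ⬝ᵥ Xc *ᵥ v := by
    rw [hUeq, star_trivial]
    rw [← mulVec_mulVec, ← mulVec_mulVec, dotProduct_mulVec, vecMul_transpose]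
  rw [hkey]
  rcases lt_or_eq_of_le (by simpa using hXcpsd.dotProduct_mulVec_nonneg v) with h | h
  · exact h
  · exfalso
    have hXcv : Xc *ᵥ v = 0 := psd_vanish hXcpsd h.symm
    have hXsv : Xs *ᵥ v = 0 := hker v hXcv
    have hvrange : v ∈ LinearMap.range Xs.mulVecLin := by
      rw [← hrange]
      exact ⟨u, by simp [Matrix.mulVecLin_apply, hv]⟩
    obtain ⟨w, hw⟩ := hvrange
    rw [Matrix.mulVecLin_apply] at hw
    have : v ⬝ᵥ v = 0 := by
      nth_rewrite 2 [← hw]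
      rw [dotProduct_mulVec, ← hXs.eq, vecMul_transpose, hXsv, zero_dotProduct]
    exact hvne (dotProduct_self_eq_zero.1 this)

end Helpers

/-- representation of optimal solutions on the optimal partition
(Theorem 2.7 of de Klerk). -/
theorem stmt13 {n m : ℕ} (C Cbar : Matrix (Fin n) (Fin n) ℝ)
    (A : Fin m → Matrix (Fin n) (Fin n) ℝ) (b : Fin m → ℝ)
    (hSA : StandingAssumptions C Cbar A b)
    (ε : ℝ) (hε : ε ∈ interior (Eset C Cbar A b))
    (Xs Ss : Matrix (Fin n) (Fin n) ℝ) (ys : Fin m → ℝ)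
    (hmc : MaxComp C Cbar A b ε Xs ys Ss)
    (kB kN : ℕ) (QB : Matrix (Fin n) (Fin kB) ℝ) (QN : Matrix (Fin n) (Fin kN) ℝ)
    (hQBorth : QBᵀ * QB = 1)
    (hQBrange : LinearMap.range QB.mulVecLin = LinearMap.range Xs.mulVecLin)
    (hQNorth : QNᵀ * QN = 1)
    (hQNrange : LinearMap.range QN.mulVecLin = LinearMap.range Ss.mulVecLin)
    (Xc Sc : Matrix (Fin n) (Fin n) ℝ) (yc : Fin m → ℝ)
    (hoptP : Xc ∈ PrimalOpt C Cbar A b ε) (hoptD : (yc, Sc) ∈ DualOpt C Cbar A b ε) :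
    (∃! UX : Matrix (Fin kB) (Fin kB) ℝ, UX.PosSemidef ∧ Xc = QB * UX * QBᵀ) ∧
      (∃! US : Matrix (Fin kN) (Fin kN) ℝ, US.PosSemidef ∧ Sc = QN * US * QNᵀ) ∧
      (0 < kB → Xc ∈ intrinsicInterior ℝ (PrimalOpt C Cbar A b ε) →
        ∀ UX : Matrix (Fin kB) (Fin kB) ℝ, UX.PosSemidef → Xc = QB * UX * QBᵀ → UX.PosDef) ∧
      (0 < kN → (yc, Sc) ∈ intrinsicInterior ℝ (DualOpt C Cbar A b ε) →
        ∀ US : Matrix (Fin kN) (Fin kN) ℝ, US.PosSemidef → Sc = QN * US * QNᵀ → US.PosDef) := by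
  have hXsopt : Xs ∈ PrimalOpt C Cbar A b ε := intrinsicInterior_subset hmc.1
  have hSsopt : (ys, Ss) ∈ DualOpt C Cbar A b ε := intrinsicInterior_subset hmc.2
  have hXs_symm : Xs.IsSymm := hXsopt.1.1
  have hXs_psd : Xs.PosSemidef := hXsopt.1.2.2
  have hXc_symm : Xc.IsSymm := hoptP.1.1
  have hXc_psd : Xc.PosSemidef := hoptP.1.2.2
  have hSs_symm : Ss.IsSymm := hSsopt.1.1
  have hSs_psd : Ss.PosSemidef := hSsopt.1.2.2
  have hSc_symm : Sc.IsSymm := hoptD.1.1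
  have hSc_psd : Sc.PosSemidef := hoptD.1.2.2
  obtain ⟨Z, hZ, t, ht, ht1, hcomb⟩ := relint_combo hmc.1 hoptP
  have hkerP : ∀ v, Xs *ᵥ v = 0 → Xc *ᵥ v = 0 :=
    ker_mono hXc_psd hZ.1.2.2 ht ht1 hcomb
  obtain ⟨p, hp, t', ht', ht1', hcomb'⟩ := relint_combo hmc.2 hoptD
  have hcombS : Ss = t' • Sc + (1 - t') • p.2 := by
    simpa using congrArg Prod.snd hcomb'
  have hkerD : ∀ v, Ss *ᵥ v = 0 → Sc *ᵥ v = 0 :=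
    ker_mono hSc_psd hp.1.2.2 ht' ht1' hcombS
  refine ⟨side_exists_unique hQBorth hQBrange hXs_symm hXc_symm hXc_psd hkerP,
    side_exists_unique hQNorth hQNrange hSs_symm hSc_symm hSc_psd hkerD, ?_, ?_⟩
  · intro _ hXcint UX hUXpsd hUXeq
    obtain ⟨Z', hZ', s', hs', hs1', hcomb₂⟩ := relint_combo hXcint hXsopt
    have hkerP' : ∀ v, Xc *ᵥ v = 0 → Xs *ᵥ v = 0 :=
      ker_mono hXs_psd hZ'.1.2.2 hs' hs1' hcomb₂
    exact side_posdef hQBorth hQBrange hXs_symm hXc_psd hkerP' UX hUXpsd hUXeq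
  · intro _ hScint US hUSpsd hUSeq
    obtain ⟨p', hp', s', hs', hs1', hcomb₂⟩ := relint_combo hScint hSsopt
    have hcombS' : Sc = s' • Ss + (1 - s') • p'.2 := by
      simpa using congrArg Prod.snd hcomb₂
    have hkerD' : ∀ v, Sc *ᵥ v = 0 → Ss *ᵥ v = 0 :=
      ker_mono hSs_psd hp'.1.2.2 hs' hs1' hcombS'
    exact side_posdef hQNorth hQNrange hSs_symm hSc_psd hkerD' US hUSpsd hUSeq
end

section
/- Fix an optimal solution (X̌, y̌, Š) ∈ P*(0) × D*(0). Then there exist constants θ_1, θ_2 > 0, independent of μ, such that for every μ > 0 the central solution (X^μ, y^μ, S^μ) at ε = 0 satisfies: the Frobenius-norm distance from X^μ to the affine set {X ∈ S^n : ⟨A^i, X⟩ = b_i for i = 1,…,m and ⟨Š, X⟩ = 0} is at most θ_1 n μ, and the Frobenius-norm distance from S^μ to the affine set {S ∈ S^n : S = C − Σ_i y_i A^i for some y ∈ ℝ^m and ⟨X̌, S⟩ = 0} is at most θ_2 n μ. -/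
open Matrix Set

private lemma frob_nonneg' {α β : Type*} [Fintype α] [Fintype β] (M : Matrix α β ℝ) :
    0 ≤ frobNorm M := Real.sqrt_nonneg _

private lemma frob_zero' {α β : Type*} [Fintype α] [Fintype β] :
    frobNorm (0 : Matrix α β ℝ) = 0 := by simp [frobNorm]

private lemma frob_smul' {α β : Type*} [Fintype α] [Fintype β] (c : ℝ) (M : Matrix α β ℝ) :
    frobNorm (c • M) = |c| * frobNorm M := by
  unfold frobNorm
  rw [← Real.sqrt_sq_eq_abs, ← Real.sqrt_mul (sq_nonneg c)]
  congr 1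
  rw [Finset.mul_sum]
  refine Finset.sum_congr rfl fun i _ => ?_
  rw [Finset.mul_sum]
  refine Finset.sum_congr rfl fun j _ => ?_
  simp [mul_pow]

open scoped MatrixOrder in
private lemma psd_trace_nonneg' {k : ℕ} {P Q : Matrix (Fin k) (Fin k) ℝ}
    (hP : P.PosSemidef) (hQ : Q.PosSemidef) : 0 ≤ (P * Q).trace := by
  obtain ⟨B, hB⟩ := CStarAlgebra.nonneg_iff_eq_star_mul_self.mp hP.nonneg
  rw [Matrix.star_eq_conjTranspose] at hB
  have h2 := hQ.mul_mul_conjTranspose_same B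
  have h3 : (P * Q).trace = (B * Q * B.conjTranspose).trace := by
    rw [hB, Matrix.mul_assoc, Matrix.trace_mul_comm, Matrix.mul_assoc]
  rw [h3, Matrix.trace]
  apply Finset.sum_nonneg
  intro i _
  have := h2.dotProduct_mulVec_nonneg (Pi.single i 1)
  simpa [Matrix.diag, Matrix.mulVec_single] using this

private lemma trace_form' {n m : ℕ} {C : Matrix (Fin n) (Fin n) ℝ}
    {A : Fin m → Matrix (Fin n) (Fin n) ℝ} {b : Fin m → ℝ} {y : Fin m → ℝ}
    {S X : Matrix (Fin n) (Fin n) ℝ}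
    (hS : S = C - ∑ i, y i • A i) (hX : ∀ i, ((A i) * X).trace = b i) :
    (S * X).trace = (C * X).trace - ∑ i, b i * y i := by
  rw [hS, Matrix.sub_mul, Matrix.trace_sub, Finset.sum_mul, Matrix.trace_sum]
  congr 1
  refine Finset.sum_congr rfl fun i _ => ?_
  rw [Matrix.smul_mul, Matrix.trace_smul, hX i, smul_eq_mul, mul_comm]

/-- Hoffman-type bounds on the distance of central solutions to the optimal
affine subspaces determined by a fixed optimal solution. -/
theorem stmt16 {n m : ℕ} (C Cbar : Matrix (Fin n) (Fin n) ℝ)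
    (A : Fin m → Matrix (Fin n) (Fin n) ℝ) (b : Fin m → ℝ)
    (hSA : StandingAssumptions C Cbar A b)
    (Xc Sc : Matrix (Fin n) (Fin n) ℝ) (yc : Fin m → ℝ)
    (hoptP : Xc ∈ PrimalOpt C Cbar A b 0) (hoptD : (yc, Sc) ∈ DualOpt C Cbar A b 0) :
    ∃ θ₁ θ₂ : ℝ, 0 < θ₁ ∧ 0 < θ₂ ∧
      ∀ μ : ℝ, 0 < μ →
        ∀ (Xμ Sμ : Matrix (Fin n) (Fin n) ℝ) (yμ : Fin m → ℝ),
          CentralSol C Cbar A b 0 μ Xμ yμ Sμ →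
          sInf ((fun X => frobNorm (Xμ - X)) ''
              {X : Matrix (Fin n) (Fin n) ℝ | X.IsSymm ∧ (∀ i, ((A i) * X).trace = b i) ∧
                (Sc * X).trace = 0}) ≤ θ₁ * (n : ℝ) * μ ∧
            sInf ((fun S => frobNorm (Sμ - S)) ''
              {S : Matrix (Fin n) (Fin n) ℝ | (∃ y : Fin m → ℝ, S = C - ∑ i, y i • A i) ∧
                (Xc * S).trace = 0}) ≤ θ₂ * (n : ℝ) * μ := by
  have hScEq : Sc = C - ∑ i, yc i • A i := eq_sub_of_add_eq' (by simpa using hoptD.1.2.1)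
  have key1 : ∃ θ₁ : ℝ, 0 < θ₁ ∧ ∀ μ : ℝ, 0 < μ →
      ∀ (Xμ Sμ : Matrix (Fin n) (Fin n) ℝ) (yμ : Fin m → ℝ),
        CentralSol C Cbar A b 0 μ Xμ yμ Sμ →
        sInf ((fun X => frobNorm (Xμ - X)) ''
            {X : Matrix (Fin n) (Fin n) ℝ | X.IsSymm ∧ (∀ i, ((A i) * X).trace = b i) ∧
              (Sc * X).trace = 0}) ≤ θ₁ * (n : ℝ) * μ := by
    by_cases hD : ∃ D : Matrix (Fin n) (Fin n) ℝ,
        D.IsSymm ∧ (∀ i, ((A i) * D).trace = 0) ∧ (Sc * D).trace ≠ 0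
    · obtain ⟨D, hDs, hDA, hDc⟩ := hD
      have hcpos : 0 < |(Sc * D).trace| := abs_pos.mpr hDc
      refine ⟨frobNorm D / |(Sc * D).trace| + 1,
        add_pos_of_nonneg_of_pos (div_nonneg (frob_nonneg' D) (abs_nonneg _)) one_pos, ?_⟩
      intro μ hμ Xμ Sμ yμ hc
      obtain ⟨hP, hDf, hXS⟩ := hc
      have hSμ : Sμ = C - ∑ i, yμ i • A i := eq_sub_of_add_eq' (by simpa using hDf.2.1)
      have trSX : (Sμ * Xμ).trace = μ * (n : ℝ) := by
        rw [Matrix.trace_mul_comm, hXS, Matrix.trace_smul, Matrix.trace_one]; simp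
      have eq1 : (Sc * Xμ).trace = (C * Xμ).trace - ∑ i, b i * yc i :=
        trace_form' hScEq hP.2.1
      have eq2 : (Sμ * Xμ).trace = (C * Xμ).trace - ∑ i, b i * yμ i :=
        trace_form' hSμ hP.2.1
      have hyopt : ∑ i, b i * yμ i ≤ ∑ i, b i * yc i := hoptD.2 yμ Sμ hDf
      have hδle : (Sc * Xμ).trace ≤ μ * (n : ℝ) := by
        rw [eq2] at trSX; rw [eq1]; linarith
      have hδ0 : 0 ≤ (Sc * Xμ).trace := psd_trace_nonneg' hoptD.1.2.2 hP.2.2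
      set q : ℝ := (Sc * Xμ).trace / (Sc * D).trace with hq
      have hbdd : BddBelow ((fun X => frobNorm (Xμ - X)) ''
          {X : Matrix (Fin n) (Fin n) ℝ | X.IsSymm ∧ (∀ i, ((A i) * X).trace = b i) ∧
            (Sc * X).trace = 0}) := ⟨0, by rintro x ⟨X, -, rfl⟩; exact frob_nonneg' _⟩
      have hmem : Xμ - q • D ∈ {X : Matrix (Fin n) (Fin n) ℝ | X.IsSymm ∧
          (∀ i, ((A i) * X).trace = b i) ∧ (Sc * X).trace = 0} := by
        refine ⟨?_, ?_, ?_⟩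
        · show (Xμ - q • D)ᵀ = Xμ - q • D
          rw [Matrix.transpose_sub, Matrix.transpose_smul, hP.1, hDs]
        · intro i
          rw [Matrix.mul_sub, Matrix.trace_sub, Matrix.mul_smul, Matrix.trace_smul,
            hDA i, smul_zero, sub_zero, hP.2.1 i]
        · rw [Matrix.mul_sub, Matrix.trace_sub, Matrix.mul_smul, Matrix.trace_smul,
            smul_eq_mul, hq, div_mul_cancel₀ _ hDc, sub_self]
      refine le_trans (csInf_le hbdd ⟨Xμ - q • D, hmem, rfl⟩) ?_
      have hdiff : Xμ - (Xμ - q • D) = q • D := sub_sub_cancel _ _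
      beta_reduce
      rw [hdiff, frob_smul', hq, abs_div, abs_of_nonneg hδ0]
      calc (Sc * Xμ).trace / |(Sc * D).trace| * frobNorm D
          ≤ (μ * (n : ℝ)) / |(Sc * D).trace| * frobNorm D := by
            gcongr
            exact frob_nonneg' D
        _ = (frobNorm D / |(Sc * D).trace|) * ((n : ℝ) * μ) := by ring
        _ ≤ (frobNorm D / |(Sc * D).trace| + 1) * ((n : ℝ) * μ) := by
            have hnn : 0 ≤ (n : ℝ) * μ := by positivity
            nlinarith
        _ = (frobNorm D / |(Sc * D).trace| + 1) * (n : ℝ) * μ := by ring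
    · push_neg at hD
      refine ⟨1, one_pos, ?_⟩
      intro μ hμ Xμ Sμ yμ hc
      obtain ⟨hP, hDf, hXS⟩ := hc
      rcases Set.eq_empty_or_nonempty {X : Matrix (Fin n) (Fin n) ℝ | X.IsSymm ∧
          (∀ i, ((A i) * X).trace = b i) ∧ (Sc * X).trace = 0} with he | hne
      · rw [he, Set.image_empty, Real.sInf_empty]; positivity
      · obtain ⟨X₀, hX₀⟩ := hne
        obtain ⟨hs, hA', hS'⟩ := hX₀
        have hsymm : (Xμ - X₀).IsSymm := by
          show (Xμ - X₀)ᵀ = Xμ - X₀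
          rw [Matrix.transpose_sub, hP.1, hs]
        have htr : ∀ i, ((A i) * (Xμ - X₀)).trace = 0 := by
          intro i
          rw [Matrix.mul_sub, Matrix.trace_sub, hP.2.1 i, hA' i, sub_self]
        have hD0 := hD (Xμ - X₀) hsymm htr
        have hXμ0 : (Sc * Xμ).trace = 0 := by
          rw [Matrix.mul_sub, Matrix.trace_sub, hS'] at hD0; linarith
        have hbdd : BddBelow ((fun X => frobNorm (Xμ - X)) ''
            {X : Matrix (Fin n) (Fin n) ℝ | X.IsSymm ∧ (∀ i, ((A i) * X).trace = b i) ∧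
              (Sc * X).trace = 0}) := ⟨0, by rintro x ⟨X, -, rfl⟩; exact frob_nonneg' _⟩
        refine le_trans (csInf_le hbdd ⟨Xμ, ⟨hP.1, hP.2.1, hXμ0⟩, rfl⟩) ?_
        beta_reduce
        rw [sub_self, frob_zero']
        positivity
  have key2 : ∃ θ₂ : ℝ, 0 < θ₂ ∧ ∀ μ : ℝ, 0 < μ →
      ∀ (Xμ Sμ : Matrix (Fin n) (Fin n) ℝ) (yμ : Fin m → ℝ),
        CentralSol C Cbar A b 0 μ Xμ yμ Sμ →
        sInf ((fun S => frobNorm (Sμ - S)) ''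
            {S : Matrix (Fin n) (Fin n) ℝ | (∃ y : Fin m → ℝ, S = C - ∑ i, y i • A i) ∧
              (Xc * S).trace = 0}) ≤ θ₂ * (n : ℝ) * μ := by
    by_cases hb : b = 0
    · refine ⟨1, one_pos, ?_⟩
      intro μ hμ Xμ Sμ yμ hc
      obtain ⟨hP, hDf, hXS⟩ := hc
      have hSμ : Sμ = C - ∑ i, yμ i • A i := eq_sub_of_add_eq' (by simpa using hDf.2.1)
      rcases Set.eq_empty_or_nonempty {S : Matrix (Fin n) (Fin n) ℝ |
          (∃ y : Fin m → ℝ, S = C - ∑ i, y i • A i) ∧ (Xc * S).trace = 0} with he | hne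
      · rw [he, Set.image_empty, Real.sInf_empty]; positivity
      · obtain ⟨S₀, hS₀mem⟩ := hne
        obtain ⟨⟨y₀, hy₀⟩, hS₀X⟩ := hS₀mem
        have e0 : (S₀ * Xc).trace = (C * Xc).trace := by
          rw [trace_form' hy₀ hoptP.1.2.1]; simp [hb]
        have e1 : (Sμ * Xc).trace = (C * Xc).trace := by
          rw [trace_form' hSμ hoptP.1.2.1]; simp [hb]
        have hz : (Xc * Sμ).trace = 0 :=
          calc (Xc * Sμ).trace = (Sμ * Xc).trace := Matrix.trace_mul_comm _ _
            _ = (C * Xc).trace := e1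
            _ = (S₀ * Xc).trace := e0.symm
            _ = (Xc * S₀).trace := Matrix.trace_mul_comm _ _
            _ = 0 := hS₀X
        have hbdd : BddBelow ((fun S => frobNorm (Sμ - S)) ''
            {S : Matrix (Fin n) (Fin n) ℝ | (∃ y : Fin m → ℝ, S = C - ∑ i, y i • A i) ∧
              (Xc * S).trace = 0}) := ⟨0, by rintro x ⟨S, -, rfl⟩; exact frob_nonneg' _⟩
        refine le_trans (csInf_le hbdd ⟨Sμ, ⟨⟨yμ, hSμ⟩, hz⟩, rfl⟩) ?_
        beta_reduce
        rw [sub_self, frob_zero']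
        positivity
    · have hj : ∃ j, b j ≠ 0 := by
        by_contra h
        push_neg at h
        exact hb (funext h)
      obtain ⟨j, hj⟩ := hj
      have hbpos : 0 < |b j| := abs_pos.mpr hj
      refine ⟨frobNorm (A j) / |b j| + 1,
        add_pos_of_nonneg_of_pos (div_nonneg (frob_nonneg' _) (abs_nonneg _)) one_pos, ?_⟩
      intro μ hμ Xμ Sμ yμ hc
      obtain ⟨hP, hDf, hXS⟩ := hc
      have hSμ : Sμ = C - ∑ i, yμ i • A i := eq_sub_of_add_eq' (by simpa using hDf.2.1)
      have trSX : (Sμ * Xμ).trace = μ * (n : ℝ) := by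
        rw [Matrix.trace_mul_comm, hXS, Matrix.trace_smul, Matrix.trace_one]; simp
      have eq2 : (C * Xμ).trace - ∑ i, b i * yμ i = μ * (n : ℝ) := by
        rw [← trace_form' hSμ hP.2.1]; exact trSX
      have eq3 : (Sμ * Xc).trace = (C * Xc).trace - ∑ i, b i * yμ i :=
        trace_form' hSμ hoptP.1.2.1
      have hopt : (C * Xc).trace ≤ (C * Xμ).trace := by
        have := hoptP.2 Xμ hP
        simpa using this
      have hδle : (Xc * Sμ).trace ≤ μ * (n : ℝ) := by
        rw [Matrix.trace_mul_comm, eq3]; linarith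
      have hδ0 : 0 ≤ (Xc * Sμ).trace := psd_trace_nonneg' hoptP.1.2.2 hDf.2.2
      set q : ℝ := (Xc * Sμ).trace / b j with hqdef
      have hsum : ∑ i, (yμ i + q * (Pi.single j 1 : Fin m → ℝ) i) • A i
          = (∑ i, yμ i • A i) + q • A j := by
        simp_rw [add_smul]
        rw [Finset.sum_add_distrib]
        congr 1
        rw [Finset.sum_eq_single j]
        · rw [Pi.single_eq_same, mul_one]
        · intro i _ hij
          rw [Pi.single_eq_of_ne hij, mul_zero, zero_smul]
        · intro h
          exact absurd (Finset.mem_univ j) h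
      have hbsum : ∑ i, b i * (yμ i + q * (Pi.single j 1 : Fin m → ℝ) i)
          = (∑ i, b i * yμ i) + q * b j := by
        simp_rw [mul_add]
        rw [Finset.sum_add_distrib]
        congr 1
        rw [Finset.sum_eq_single j]
        · rw [Pi.single_eq_same, mul_one]; ring
        · intro i _ hij
          rw [Pi.single_eq_of_ne hij, mul_zero, mul_zero]
        · intro h
          exact absurd (Finset.mem_univ j) h
      have hmem : (C - ∑ i, (yμ i + q * (Pi.single j 1 : Fin m → ℝ) i) • A i) ∈
          {S : Matrix (Fin n) (Fin n) ℝ | (∃ y : Fin m → ℝ, S = C - ∑ i, y i • A i) ∧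
            (Xc * S).trace = 0} := by
        refine ⟨⟨fun i => yμ i + q * (Pi.single j 1 : Fin m → ℝ) i, rfl⟩, ?_⟩
        rw [Matrix.trace_mul_comm, trace_form' rfl hoptP.1.2.1, hbsum, hqdef,
          div_mul_cancel₀ _ hj]
        have := eq3
        rw [Matrix.trace_mul_comm Sμ Xc] at this
        linarith
      have hbdd : BddBelow ((fun S => frobNorm (Sμ - S)) ''
          {S : Matrix (Fin n) (Fin n) ℝ | (∃ y : Fin m → ℝ, S = C - ∑ i, y i • A i) ∧
            (Xc * S).trace = 0}) := ⟨0, by rintro x ⟨S, -, rfl⟩; exact frob_nonneg' _⟩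
      refine le_trans (csInf_le hbdd
        ⟨C - ∑ i, (yμ i + q * (Pi.single j 1 : Fin m → ℝ) i) • A i, hmem, rfl⟩) ?_
      have hdiff : Sμ - (C - ∑ i, (yμ i + q * (Pi.single j 1 : Fin m → ℝ) i) • A i) = q • A j := by
        rw [hSμ, hsum]
        abel
      beta_reduce
      rw [hdiff, frob_smul', hqdef, abs_div, abs_of_nonneg hδ0]
      calc (Xc * Sμ).trace / |b j| * frobNorm (A j)
          ≤ (μ * (n : ℝ)) / |b j| * frobNorm (A j) := by
            gcongr
            exact frob_nonneg' _
        _ = (frobNorm (A j) / |b j|) * ((n : ℝ) * μ) := by ring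
        _ ≤ (frobNorm (A j) / |b j| + 1) * ((n : ℝ) * μ) := by
            have hnn : 0 ≤ (n : ℝ) * μ := by positivity
            nlinarith
        _ = (frobNorm (A j) / |b j| + 1) * (n : ℝ) * μ := by ring
  obtain ⟨θ₁, hθ₁, h1⟩ := key1
  obtain ⟨θ₂, hθ₂, h2⟩ := key2
  exact ⟨θ₁, θ₂, hθ₁, hθ₂, fun μ hμ Xμ Sμ yμ hc =>
    ⟨h1 μ hμ Xμ Sμ yμ hc, h2 μ hμ Xμ Sμ yμ hc⟩⟩
end

section
/- Let x_0 ∈ ℝ^n and r > 0, and let G : ℝ^n → ℝ^n be continuously differentiable on the closed ball {x : ‖x − x_0‖ ≤ r} with derivative ∇G. Assume ∇G(x_0) is invertible and that ∇G is Lipschitz continuous with constant τ on this ball. Set θ = ‖∇G(x_0)^{-1}‖ and η = ‖∇G(x_0)^{-1} G(x_0)‖. If τ θ η ≤ 1/2 and (1 − sqrt(1 − 2 τ θ η))/(θ τ) ≤ r, then there exists x* with G(x*) = 0 and ‖x* − x_0‖ ≤ (1 − sqrt(1 − 2 τ θ η))/(θ τ). -/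
open Matrix Set

lemma kant_key {E : Type*} [NormedAddCommGroup E] [NormedSpace ℝ E]
    (x₀ : E) (r : ℝ) (G : E → E) (G' : E → E →L[ℝ] E)
    (hdiff : ∀ x ∈ Metric.closedBall x₀ r, HasFDerivAt G (G' x) x)
    (τ : ℝ) (hτ : 0 ≤ τ)
    (hlip : ∀ x ∈ Metric.closedBall x₀ r, ‖G' x - G' x₀‖ ≤ τ * ‖x - x₀‖)
    {p q : E} (hp : p ∈ Metric.closedBall x₀ r) (hq : q ∈ Metric.closedBall x₀ r) :
    ‖G p - G q - (G' x₀) (p - q)‖ ≤ τ * ((‖p - x₀‖ + ‖q - x₀‖) / 2) * ‖p - q‖ := by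
  set a : ℝ := ‖p - x₀‖ with ha
  set bb : ℝ := ‖q - x₀‖ with hbb
  have har : a ≤ r := by rwa [ha, ← mem_closedBall_iff_norm]
  have hbr : bb ≤ r := by rwa [hbb, ← mem_closedBall_iff_norm]
  set γ : ℝ → E := fun u => q + u • (p - q) with hγ
  have hγdist : ∀ u ∈ Icc (0:ℝ) 1, ‖γ u - x₀‖ ≤ (1 - u) * bb + u * a := by
    intro u hu
    have : γ u - x₀ = (1 - u) • (q - x₀) + u • (p - x₀) := by
      simp only [hγ]; module
    rw [this]
    calc ‖(1 - u) • (q - x₀) + u • (p - x₀)‖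
        ≤ ‖(1 - u) • (q - x₀)‖ + ‖u • (p - x₀)‖ := norm_add_le _ _
      _ = (1 - u) * bb + u * a := by
          rw [norm_smul, norm_smul, Real.norm_eq_abs, Real.norm_eq_abs,
            abs_of_nonneg (by linarith [hu.2]), abs_of_nonneg hu.1]
  have hγmem : ∀ u ∈ Icc (0:ℝ) 1, γ u ∈ Metric.closedBall x₀ r := by
    intro u hu
    rw [mem_closedBall_iff_norm]
    calc ‖γ u - x₀‖ ≤ (1 - u) * bb + u * a := hγdist u hu
      _ ≤ (1 - u) * r + u * r := by
          have := hu.1; have := hu.2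
          gcongr <;> linarith
      _ = r := by ring
  set f : ℝ → E := fun u => G (γ u) - G q - (G' x₀) (γ u - q) with hf
  set f' : ℝ → E := fun u => (G' (γ u) - G' x₀) (p - q) with hf'
  have hfd : ∀ u ∈ Icc (0:ℝ) 1, HasDerivAt f (f' u) u := by
    intro u hu
    have hγd : HasDerivAt γ (p - q) u := by
      simpa [hγ] using ((hasDerivAt_id u).smul_const (p - q)).const_add q
    have h1 : HasDerivAt (fun u => G (γ u)) ((G' (γ u)) (p - q)) u :=
      (hdiff (γ u) (hγmem u hu)).comp_hasDerivAt u hγd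
    have h2 : HasDerivAt (fun u => (G' x₀) (γ u - q)) ((G' x₀) (p - q)) u := by
      have h := ((G' x₀).hasFDerivAt (x := γ u - q)).comp_hasDerivAt u (hγd.sub_const q)
      simpa [Function.comp_def] using h
    have := (h1.sub_const (G q)).sub h2
    exact this.congr_deriv (by simp [hf'])
  set B : ℝ → ℝ := fun u => τ * ‖p - q‖ * (bb * u + (a - bb) * (u ^ 2 / 2)) with hB
  set B' : ℝ → ℝ := fun u => τ * ‖p - q‖ * (bb + (a - bb) * u) with hB'
  have hBd : ∀ u : ℝ, HasDerivAt B (B' u) u := by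
    intro u
    have h1 : HasDerivAt (fun u : ℝ => bb * u + (a - bb) * (u ^ 2 / 2))
        (bb + (a - bb) * u) u := by
      have := ((hasDerivAt_id u).const_mul bb).add
        (((hasDerivAt_pow 2 u).div_const 2).const_mul (a - bb))
      exact this.congr_deriv (by rw [show (2:ℕ) - 1 = 1 from rfl]; push_cast; ring)
    have := h1.const_mul (τ * ‖p - q‖)
    convert this using 1 <;> ring
  have hbound : ∀ u ∈ Ico (0:ℝ) 1, ‖f' u‖ ≤ B' u := by
    intro u hu
    have hu' : u ∈ Icc (0:ℝ) 1 := ⟨hu.1, hu.2.le⟩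
    calc ‖(G' (γ u) - G' x₀) (p - q)‖ ≤ ‖G' (γ u) - G' x₀‖ * ‖p - q‖ :=
        (G' (γ u) - G' x₀).le_opNorm _
      _ ≤ τ * ‖γ u - x₀‖ * ‖p - q‖ := by
          gcongr; exact hlip (γ u) (hγmem u hu')
      _ ≤ τ * ((1 - u) * bb + u * a) * ‖p - q‖ :=
          mul_le_mul_of_nonneg_right
            (mul_le_mul_of_nonneg_left (hγdist u hu') hτ) (norm_nonneg _)
      _ = B' u := by rw [hB']; ring
  have hf0 : ‖f 0‖ ≤ B 0 := by simp [hf, hB, hγ]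
  have := image_norm_le_of_norm_deriv_right_le_deriv_boundary
    (fun u hu => (hfd u hu).continuousAt.continuousWithinAt)
    (fun u hu => (hfd u ⟨hu.1, hu.2.le⟩).hasDerivWithinAt)
    hf0 hBd hbound (x := 1) ⟨zero_le_one, le_rfl⟩
  have hthis : ‖G p - G q - (G' x₀) (p - q)‖ ≤ B 1 := by
    simpa [hf, hγ] using this
  calc ‖G p - G q - (G' x₀) (p - q)‖ ≤ B 1 := hthis
    _ = τ * ((a + bb) / 2) * ‖p - q‖ := by rw [hB]; ring

open Filter Topology

set_option maxHeartbeats 1000000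

/-- the Kantorovich theorem (Theorem 5.3.1 in Dennis–Schnabel). -/
theorem stmt18 {n : ℕ} (x₀ : EuclideanSpace ℝ (Fin n)) (r : ℝ) (hr : 0 < r)
    (G : EuclideanSpace ℝ (Fin n) → EuclideanSpace ℝ (Fin n))
    (G' : EuclideanSpace ℝ (Fin n) → (EuclideanSpace ℝ (Fin n) →L[ℝ] EuclideanSpace ℝ (Fin n)))
    (hdiff : ∀ x ∈ Metric.closedBall x₀ r, HasFDerivAt G (G' x) x)
    (Ginv : EuclideanSpace ℝ (Fin n) →L[ℝ] EuclideanSpace ℝ (Fin n))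
    (hinv₁ : Ginv.comp (G' x₀) = ContinuousLinearMap.id ℝ (EuclideanSpace ℝ (Fin n)))
    (hinv₂ : (G' x₀).comp Ginv = ContinuousLinearMap.id ℝ (EuclideanSpace ℝ (Fin n)))
    (τ : ℝ) (hτ : 0 < τ)
    (hlip : ∀ x ∈ Metric.closedBall x₀ r, ∀ y ∈ Metric.closedBall x₀ r,
      ‖G' x - G' y‖ ≤ τ * ‖x - y‖)
    (θ η : ℝ) (hθ : θ = ‖Ginv‖) (hη : η = ‖Ginv (G x₀)‖)
    (hcond₁ : τ * θ * η ≤ 1 / 2)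
    (hcond₂ : (1 - Real.sqrt (1 - 2 * τ * θ * η)) / (θ * τ) ≤ r) :
    ∃ xs : EuclideanSpace ℝ (Fin n), G xs = 0 ∧
      ‖xs - x₀‖ ≤ (1 - Real.sqrt (1 - 2 * τ * θ * η)) / (θ * τ) := by
  by_cases hθ0 : ‖Ginv‖ = 0
  · -- degenerate case: Ginv = 0 forces the space to be trivial
    have hG0 : Ginv = 0 := norm_eq_zero.mp hθ0
    have htriv : ∀ v : EuclideanSpace ℝ (Fin n), v = 0 := by
      intro v
      have h := ContinuousLinearMap.ext_iff.mp hinv₂ v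
      simpa [hG0] using h.symm
    have hθz : θ = 0 := by rw [hθ, hθ0]
    have hηz : η = 0 := by rw [hη, hG0]; simp
    refine ⟨x₀, htriv _, ?_⟩
    simp [hθz, hηz, Real.sqrt_one]
  · -- main case
    set s : ℝ := Real.sqrt (1 - 2 * τ * θ * η) with hs
    set T : ℝ := (1 - s) / (θ * τ) with hT
    have hθpos : 0 < θ := hθ ▸ lt_of_le_of_ne (norm_nonneg _) (Ne.symm hθ0)
    have hηnn : 0 ≤ η := hη ▸ norm_nonneg _
    have hK : 0 < θ * τ := mul_pos hθpos hτ
    have h1 : 0 ≤ 1 - 2 * τ * θ * η := by linarith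
    have hs0 : 0 ≤ s := Real.sqrt_nonneg _
    have hs1 : s ≤ 1 := by
      rw [hs]
      have : 1 - 2 * τ * θ * η ≤ 1 := by nlinarith
      calc Real.sqrt (1 - 2 * τ * θ * η) ≤ Real.sqrt 1 := Real.sqrt_le_sqrt this
        _ = 1 := Real.sqrt_one
    have hss : s ^ 2 = 1 - 2 * τ * θ * η := Real.sq_sqrt h1
    have hTnn : 0 ≤ T := div_nonneg (by linarith) hK.le
    have hTr : T ≤ r := hcond₂
    have hTfix : η + θ * τ / 2 * T ^ 2 = T := by
      rw [hT]
      field_simp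
      nlinarith [hss]
    -- the one-sided Lipschitz hypothesis for the key lemma
    have hlip' : ∀ x ∈ Metric.closedBall x₀ r, ‖G' x - G' x₀‖ ≤ τ * ‖x - x₀‖ := by
      intro x hx
      exact hlip x hx x₀ (Metric.mem_closedBall_self hr.le)
    have key := fun {p q} hp hq => kant_key x₀ r G G' hdiff τ hτ.le hlip' (p := p) (q := q) hp hq
    have hGinvlin : ∀ v, Ginv ((G' x₀) v) = v := by
      intro v
      have h := ContinuousLinearMap.ext_iff.mp hinv₁ v
      simpa using h
    -- majorizing sequence
    set t : ℕ → ℝ := fun k => Nat.rec 0 (fun _ u => η + θ * τ / 2 * u ^ 2) k with htdef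
    have ht0 : t 0 = 0 := rfl
    have hts : ∀ k, t (k + 1) = η + θ * τ / 2 * (t k) ^ 2 := fun k => rfl
    have htmono : ∀ k, 0 ≤ t k ∧ t k ≤ t (k + 1) ∧ t k ≤ T := by
      intro k
      induction k with
      | zero =>
        refine ⟨le_rfl, ?_, hTnn⟩
        rw [ht0, hts 0, ht0]
        nlinarith
      | succ k ih =>
        obtain ⟨h0, h1', h2⟩ := ih
        have h0' : 0 ≤ t (k + 1) := h0.trans h1'
        have hstepmono : ∀ u v : ℝ, 0 ≤ u → u ≤ v →
            η + θ * τ / 2 * u ^ 2 ≤ η + θ * τ / 2 * v ^ 2 := by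
          intro u v hu huv
          have h2' : u ^ 2 ≤ v ^ 2 := by nlinarith
          have := mul_le_mul_of_nonneg_left h2' (by positivity : (0:ℝ) ≤ θ * τ / 2)
          linarith
        refine ⟨h0', ?_, ?_⟩
        · calc t (k + 1) = η + θ * τ / 2 * (t k) ^ 2 := hts k
            _ ≤ η + θ * τ / 2 * (t (k + 1)) ^ 2 := hstepmono _ _ h0 h1'
            _ = t (k + 1 + 1) := (hts (k + 1)).symm
        · calc t (k + 1) = η + θ * τ / 2 * (t k) ^ 2 := hts k
            _ ≤ η + θ * τ / 2 * T ^ 2 := hstepmono _ _ h0 h2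
            _ = T := hTfix
    -- Newton-type iteration
    set x : ℕ → EuclideanSpace ℝ (Fin n) :=
      fun k => Nat.rec x₀ (fun _ z => z - Ginv (G z)) k with hxdef
    have hx0 : x 0 = x₀ := rfl
    have hxs : ∀ k, x (k + 1) = x k - Ginv (G (x k)) := fun k => rfl
    have hginv : ∀ k, Ginv (G (x k)) = x k - x (k + 1) := by
      intro k; rw [hxs k]; abel
    have hmain : ∀ k, ‖x k - x₀‖ ≤ t k ∧ ‖x (k + 1) - x k‖ ≤ t (k + 1) - t k := by
      intro k
      induction k with
      | zero =>
        refine ⟨by simp [hx0, ht0], ?_⟩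
        have e : x (0 + 1) - x 0 = -(Ginv (G x₀)) := by rw [hxs 0, hx0]; abel
        have e2 : t (0 + 1) - t 0 = η := by rw [hts 0, ht0]; ring
        rw [e, norm_neg, ← hη, e2]
      | succ k ih =>
        obtain ⟨hb, hstep⟩ := ih
        have htk := htmono k
        have htk1 := htmono (k + 1)
        have hb' : ‖x (k + 1) - x₀‖ ≤ t (k + 1) := by
          have h := norm_add_le (x (k + 1) - x k) (x k - x₀)
          rw [sub_add_sub_cancel] at h
          linarith
        refine ⟨hb', ?_⟩
        have hmem1 : x (k + 1) ∈ Metric.closedBall x₀ r := by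
          rw [Metric.mem_closedBall, dist_eq_norm]
          linarith [htk1.2.2]
        have hmemk : x k ∈ Metric.closedBall x₀ r := by
          rw [Metric.mem_closedBall, dist_eq_norm]
          linarith [htk.2.2]
        have hid : x (k + 1 + 1) - x (k + 1) =
            -(Ginv (G (x (k + 1)) - G (x k) - (G' x₀) (x (k + 1) - x k))) := by
          rw [map_sub, map_sub, hGinvlin, hginv k, hginv (k + 1)]
          abel
        rw [hid, norm_neg]
        have hkey := key hmem1 hmemk
        have hle := Ginv.le_opNorm (G (x (k + 1)) - G (x k) - (G' x₀) (x (k + 1) - x k))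
        rw [← hθ] at hle
        have hnn : (0:ℝ) ≤ ‖x (k + 1) - x k‖ := norm_nonneg _
        have hnn2 : (0:ℝ) ≤ ‖x k - x₀‖ := norm_nonneg _
        calc ‖Ginv (G (x (k + 1)) - G (x k) - (G' x₀) (x (k + 1) - x k))‖
            ≤ θ * ‖G (x (k + 1)) - G (x k) - (G' x₀) (x (k + 1) - x k)‖ := hle
          _ ≤ θ * (τ * ((‖x (k + 1) - x₀‖ + ‖x k - x₀‖) / 2) * ‖x (k + 1) - x k‖) := by
              exact mul_le_mul_of_nonneg_left hkey hθpos.le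
          _ = θ * τ / 2 * ((‖x (k + 1) - x₀‖ + ‖x k - x₀‖) * ‖x (k + 1) - x k‖) := by ring
          _ ≤ θ * τ / 2 * ((t (k + 1) + t k) * (t (k + 1) - t k)) := by
              have hprod : (‖x (k + 1) - x₀‖ + ‖x k - x₀‖) * ‖x (k + 1) - x k‖ ≤
                  (t (k + 1) + t k) * (t (k + 1) - t k) :=
                mul_le_mul (add_le_add hb' hb) hstep (norm_nonneg _)
                  (by linarith [htk.1, htk1.1])
              exact mul_le_mul_of_nonneg_left hprod (by positivity)
          _ = t (k + 1 + 1) - t (k + 1) := by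
              rw [hts (k + 1), hts k]
              ring
    -- Cauchy sequence
    have htmono' : Monotone t := monotone_nat_of_le_succ fun k => (htmono k).2.1
    have htbdd : BddAbove (Set.range t) := ⟨T, by rintro _ ⟨k, rfl⟩; exact (htmono k).2.2⟩
    set L : ℝ := ⨆ k, t k with hL
    have htL : Tendsto t atTop (𝓝 L) := tendsto_atTop_ciSup htmono' htbdd
    have htleL : ∀ k, t k ≤ L := fun k => le_ciSup htbdd k
    have hdistx : ∀ m k, m ≤ k → dist (x m) (x k) ≤ t k - t m := by
      intro m k hmk
      calc dist (x m) (x k) ≤ ∑ i ∈ Finset.Ico m k, dist (x i) (x (i + 1)) :=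
          dist_le_Ico_sum_dist x hmk
        _ ≤ ∑ i ∈ Finset.Ico m k, (t (i + 1) - t i) := by
            refine Finset.sum_le_sum fun i _ => ?_
            rw [dist_eq_norm, norm_sub_rev]
            exact (hmain i).2
        _ = t k - t m := by
            rw [Finset.sum_Ico_eq_sub _ hmk, Finset.sum_range_sub, Finset.sum_range_sub]
            ring
    have hcauchy : CauchySeq x := by
      apply cauchySeq_of_le_tendsto_0' (fun k => L - t k)
      · intro m k hmk
        calc dist (x m) (x k) ≤ t k - t m := hdistx m k hmk
          _ ≤ L - t m := by linarith [htleL k]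
      · have h0 : Tendsto (fun k => L - t k) atTop (𝓝 (L - L)) :=
          tendsto_const_nhds.sub htL
        simpa using h0
    obtain ⟨xs, hlim⟩ := cauchySeq_tendsto_of_complete hcauchy
    have hxk_ball : ∀ k, x k ∈ Metric.closedBall x₀ r := by
      intro k
      rw [Metric.mem_closedBall, dist_eq_norm]
      linarith [(hmain k).1, (htmono k).2.2]
    have hxsT : ‖xs - x₀‖ ≤ T := by
      have hd : Tendsto (fun k => dist (x k) x₀) atTop (𝓝 (dist xs x₀)) :=
        hlim.dist tendsto_const_nhds
      have hb : ∀ k, dist (x k) x₀ ≤ T := fun k => by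
        rw [dist_eq_norm]; linarith [(hmain k).1, (htmono k).2.2]
      have := le_of_tendsto hd (Filter.Eventually.of_forall hb)
      rwa [dist_eq_norm] at this
    have hxs_ball : xs ∈ Metric.closedBall x₀ r := by
      rw [Metric.mem_closedBall, dist_eq_norm]
      linarith
    -- G xs = 0
    have hxnorm0 : Tendsto (fun k => ‖x k - xs‖) atTop (𝓝 0) := by
      have h : Tendsto (fun k => x k - xs) atTop (𝓝 (xs - xs)) :=
        hlim.sub tendsto_const_nhds
      rw [sub_self] at h
      simpa using h.norm
    have hGlim : Tendsto (fun k => G (x k)) atTop (𝓝 (G xs)) := by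
      rw [tendsto_iff_norm_sub_tendsto_zero]
      apply squeeze_zero (fun k => norm_nonneg _)
        (g := fun k => (τ * r + ‖G' x₀‖) * ‖x k - xs‖)
      · intro k
        have hkey := key (hxk_ball k) hxs_ball
        have h2 : ‖(G' x₀) (x k - xs)‖ ≤ ‖G' x₀‖ * ‖x k - xs‖ := (G' x₀).le_opNorm _
        have h3 : ‖G (x k) - G xs‖ ≤
            ‖G (x k) - G xs - (G' x₀) (x k - xs)‖ + ‖(G' x₀) (x k - xs)‖ := by
          have := norm_add_le (G (x k) - G xs - (G' x₀) (x k - xs)) ((G' x₀) (x k - xs))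
          rw [sub_add_cancel] at this
          exact this
        have h4 : τ * ((‖x k - x₀‖ + ‖xs - x₀‖) / 2) * ‖x k - xs‖ ≤ τ * r * ‖x k - xs‖ := by
          have ha : ‖x k - x₀‖ ≤ r := by
            have := hxk_ball k; rwa [Metric.mem_closedBall, dist_eq_norm] at this
          have hb : ‖xs - x₀‖ ≤ r := by linarith
          have havg : (‖x k - x₀‖ + ‖xs - x₀‖) / 2 ≤ r := by linarith
          exact mul_le_mul_of_nonneg_right
            (mul_le_mul_of_nonneg_left havg hτ.le) (norm_nonneg _)
        have h5 := hkey.trans h4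
        calc ‖G (x k) - G xs‖
            ≤ ‖G (x k) - G xs - (G' x₀) (x k - xs)‖ + ‖(G' x₀) (x k - xs)‖ := h3
          _ ≤ τ * r * ‖x k - xs‖ + ‖G' x₀‖ * ‖x k - xs‖ := add_le_add h5 h2
          _ = (τ * r + ‖G' x₀‖) * ‖x k - xs‖ := by ring
      · have h9 := hxnorm0.const_mul (τ * r + ‖G' x₀‖)
        rw [mul_zero] at h9
        exact h9
    have h3 : Tendsto (fun k => Ginv (G (x k))) atTop (𝓝 (Ginv (G xs))) :=
      (Ginv.continuous.tendsto _).comp hGlim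
    have h4 : Tendsto (fun k => Ginv (G (x k))) atTop (𝓝 0) := by
      have hshift : Tendsto (fun k => x (k + 1)) atTop (𝓝 xs) :=
        hlim.comp (tendsto_add_atTop_nat 1)
      have h : Tendsto (fun k => x k - x (k + 1)) atTop (𝓝 (xs - xs)) :=
        hlim.sub hshift
      rw [sub_self] at h
      exact h.congr fun k => (hginv k).symm
    have hGinv0 : Ginv (G xs) = 0 := tendsto_nhds_unique h3 h4
    have hGxs : G xs = 0 := by
      have h := ContinuousLinearMap.ext_iff.mp hinv₂ (G xs)
      simp only [ContinuousLinearMap.comp_apply, ContinuousLinearMap.id_apply] at h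
      rw [hGinv0, map_zero] at h
      exact h.symm
    exact ⟨xs, hGxs, hxsT⟩
end
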